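/- arXiv:math/0703176 — 3 statements merged into one kernel-verified Lean document; each statement's English description precedes it below -/
import Mathlib

section
/- Suppose all periodic orbits of f₀ are hyperbolic except at most one, that x₀ is a repelling fixed point of f₀ with f₀'(x₀) < −1, and that y lies on a homoclinic orbit (z_{−k}) to x₀ (y = z_{−K} for some K ≥ 1) which contains at most one critical point of f₀. Then y lies in the closure of the set of hyperbolic periodic points of f₀; consequently (y, λ₀) is not a chain explosion point. -/
open Set Metric Filter Function Topology

/-- An `ε`-chain (of length at least one) from `x` to `y` for the map `g`:
a finite sequence `z 0 = x, …, z N = y` with `|g (z (n-1)) - z n| < ε` for `1 ≤ n ≤ N`. -/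
def EpsChain (g : ℝ → ℝ) (ε x y : ℝ) : Prop :=
  ∃ N : ℕ, 1 ≤ N ∧ ∃ zc : ℕ → ℝ, zc 0 = x ∧ zc N = y ∧
    ∀ n : ℕ, 1 ≤ n → n ≤ N → |g (zc (n - 1)) - zc n| < ε

/-- `x` is chain recurrent for `g` if for every `ε > 0` there is an `ε`-chain from `x` to itself. -/
def ChainRecurrent (g : ℝ → ℝ) (x : ℝ) : Prop :=
  ∀ ε : ℝ, 0 < ε → EpsChain g ε x x

/-- `(x, lam0)` is a chain explosion point for the family `f` with parameters ranging in `J`: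
`x` is chain recurrent for `f lam0` and there is a neighborhood (a ball) of `x` such that,
on one side of `lam0`, no point of the neighborhood is chain recurrent for `f lam`. -/
def ChainExplosionPoint (f : ℝ → ℝ → ℝ) (J : Set ℝ) (lam0 x : ℝ) : Prop :=
  ChainRecurrent (f lam0) x ∧
  ∃ δ : ℝ, 0 < δ ∧
    ((∀ lam ∈ J, lam < lam0 → ∀ y ∈ Metric.ball x δ, ¬ ChainRecurrent (f lam) y) ∨
     (∀ lam ∈ J, lam0 < lam → ∀ y ∈ Metric.ball x δ, ¬ ChainRecurrent (f lam) y))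

/-- `p` is a periodic point of `g`. -/
def IsPeriodic (g : ℝ → ℝ) (p : ℝ) : Prop := ∃ n : ℕ, 1 ≤ n ∧ g^[n] p = p

/-- The forward orbit of `p` under `g`. -/
def Orbit (g : ℝ → ℝ) (p : ℝ) : Set ℝ := {x | ∃ m : ℕ, g^[m] p = x}

/-- A periodic point `p` of least period `n` is hyperbolic if `|(gⁿ)'(p)| ≠ 1`. -/
def IsHyperbolicPeriodic (g : ℝ → ℝ) (p : ℝ) : Prop :=
  IsPeriodic g p ∧ |deriv (g^[Function.minimalPeriod g p]) p| ≠ 1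

/-- A periodic point `p` of least period `n` is repelling if `|(gⁿ)'(p)| > 1`. -/
def IsRepellingPeriodic (g : ℝ → ℝ) (p : ℝ) : Prop :=
  IsPeriodic g p ∧ 1 < |deriv (g^[Function.minimalPeriod g p]) p|

/-- The unstable manifold of a (repelling) periodic point `q` of `g`: points admitting a
backward orbit whose distance to the orbit of `q` tends to `0`. -/
def UnstableManifold (g : ℝ → ℝ) (q : ℝ) : Set ℝ :=
  {x | ∃ bo : ℕ → ℝ, bo 0 = x ∧ (∀ k : ℕ, g (bo (k + 1)) = bo k) ∧
    Filter.Tendsto (fun k => Metric.infDist (bo k) (Orbit g q)) Filter.atTop (nhds 0)}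

/-- `cp` is a homoclinic tangency of `g` to a periodic orbit: a critical point lying in the
unstable manifold of a repelling periodic point `q`, some forward iterate of which equals `q`. -/
def IsHomoclinicTangencyPt (g : ℝ → ℝ) (cp : ℝ) : Prop :=
  ∃ q : ℝ, IsRepellingPeriodic g q ∧ deriv g cp = 0 ∧ cp ∈ UnstableManifold g q ∧
    ∃ m : ℕ, 1 ≤ m ∧ g^[m] cp = q

/-- `g` has a homoclinic tangency to a periodic orbit. -/
def HasHomoclinicTangency (g : ℝ → ℝ) : Prop := ∃ cp : ℝ, IsHomoclinicTangencyPt g cp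

/-- `g` has a non-hyperbolic periodic orbit. -/
def HasNonHypPeriodicOrbit (g : ℝ → ℝ) : Prop :=
  ∃ p : ℝ, IsPeriodic g p ∧ ¬ IsHyperbolicPeriodic g p

/-- `g` has at most one non-hyperbolic periodic orbit. -/
def AtMostOneNonHypOrbit (g : ℝ → ℝ) : Prop :=
  ∀ p q : ℝ, IsPeriodic g p → ¬ IsHyperbolicPeriodic g p →
    IsPeriodic g q → ¬ IsHyperbolicPeriodic g q → Orbit g p = Orbit g q

/-- `g` has at most one homoclinic tangency to a periodic orbit. -/
def AtMostOneTangency (g : ℝ → ℝ) : Prop :=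
  ∀ cp cq : ℝ, IsHomoclinicTangencyPt g cp → IsHomoclinicTangencyPt g cq → cp = cq

/-- Genericity: at most one non-hyperbolic periodic orbit, at most one homoclinic tangency
to a periodic orbit, and not both. -/
def GenericAt (g : ℝ → ℝ) : Prop :=
  AtMostOneNonHypOrbit g ∧ AtMostOneTangency g ∧
    ¬ (HasNonHypPeriodicOrbit g ∧ HasHomoclinicTangency g)

/-- Every periodic orbit of `g` is hyperbolic. -/
def AllPeriodicHyperbolic (g : ℝ → ℝ) : Prop :=
  ∀ p : ℝ, IsPeriodic g p → IsHyperbolicPeriodic g p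

/-- `x0` is a repelling fixed point of `g`. -/
def RepellingFixedPt (g : ℝ → ℝ) (x0 : ℝ) : Prop := g x0 = x0 ∧ 1 < |deriv g x0|

/-- A homoclinic orbit `(z k)ₖ = (z₋ₖ)ₖ` to the repelling fixed point `x0` of `g`. -/
def IsHomoclinicOrbit (g : ℝ → ℝ) (x0 : ℝ) (z : ℕ → ℝ) : Prop :=
  z 0 = x0 ∧ (∀ k : ℕ, g (z (k + 1)) = z k) ∧ (∃ K : ℕ, 1 ≤ K ∧ z K ≠ x0) ∧
    Filter.Tendsto z Filter.atTop (nhds x0)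

/-- `δ > 0` is small enough that `g` is increasing on `[x0 - δ, x0 + δ]` with `g x < x` on
`[x0 - δ, x0)` and `g x > x` on `(x0, x0 + δ]`. -/
def GoodDelta (g : ℝ → ℝ) (x0 δ : ℝ) : Prop :=
  0 < δ ∧ StrictMonoOn g (Set.Icc (x0 - δ) (x0 + δ)) ∧
    (∀ x : ℝ, x0 - δ ≤ x → x < x0 → g x < x) ∧
    (∀ x : ℝ, x0 < x → x ≤ x0 + δ → x < g x)

/-- The right branch of the unstable manifold of `x0`. -/
def URight (g : ℝ → ℝ) (x0 δ : ℝ) : Set ℝ := ⋃ n : ℕ, g^[n] '' Set.Icc x0 (x0 + δ)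

/-- The left branch of the unstable manifold of `x0`. -/
def ULeft (g : ℝ → ℝ) (x0 δ : ℝ) : Set ℝ := ⋃ n : ℕ, g^[n] '' Set.Icc (x0 - δ) x0

/-- The homoclinic orbit `z` to `x0`, with tangency point `w = z L`, is a crossing orbit:
either `z k < x0` for all large `k` and `h = g^[L-1]` lies (locally) above `h w` near `w`, or
`z k > x0` for all large `k` and `h` lies (locally) below `h w` near `w`. -/
def CrossingOrbit (g : ℝ → ℝ) (x0 : ℝ) (z : ℕ → ℝ) (L : ℕ) : Prop :=
  ((∃ k0 : ℕ, ∀ k : ℕ, k0 ≤ k → z k < x0) ∧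
    ∀ᶠ x in nhds (z L), g^[L - 1] (z L) ≤ g^[L - 1] x) ∨
  ((∃ k0 : ℕ, ∀ k : ℕ, k0 ≤ k → x0 < z k) ∧
    ∀ᶠ x in nhds (z L), g^[L - 1] x ≤ g^[L - 1] (z L))

/-- The ω-limit set of a set `A` under `g`: `⋂_N closure (⋃_{n ≥ N} g^[n] '' A)`. -/
def omegaSet (g : ℝ → ℝ) (A : Set ℝ) : Set ℝ :=
  ⋂ N : ℕ, closure (⋃ n : ℕ, ⋃ _ : N ≤ n, g^[n] '' A)

/-- `⋂_{ε > 0} ω(B_ε(z))`, where `B_ε(z)` is the open `ε`-ball about `z` in `I`. -/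
def OmegaBall (g : ℝ → ℝ) (I : Set ℝ) (z : ℝ) : Set ℝ :=
  ⋂ ε : ℝ, ⋂ _ : (0 : ℝ) < ε, omegaSet g (Metric.ball z ε ∩ I)

/-- `y ∈ ⋂_{ε>0} ω(B_ε(z))` is a barricade for `z` if `⋂_{ε>0} ω(B_ε(y))` is not contained
in `⋂_{ε>0} ω(B_ε(z))`. -/
def Barricade (g : ℝ → ℝ) (I : Set ℝ) (z y : ℝ) : Prop :=
  y ∈ OmegaBall g I z ∧ ¬ OmegaBall g I y ⊆ OmegaBall g I z

/-- `M = Is 0 ∪ ⋯ ∪ Is (n-1)` is an `n`-cycle of closed intervals with pairwise disjoint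
interiors, permuted cyclically by `g`. -/
def IsCycleOfIntervals (g : ℝ → ℝ) (Is : ℕ → Set ℝ) (n : ℕ) (M : Set ℝ) : Prop :=
  1 ≤ n ∧
  (∀ k : ℕ, k < n → ∃ u v : ℝ, u ≤ v ∧ Is k = Set.Icc u v) ∧
  (∀ k : ℕ, k < n → ∀ l : ℕ, l < n → k ≠ l → interior (Is k) ∩ interior (Is l) = ∅) ∧
  (∀ k : ℕ, k < n → g '' Is k = Is ((k + 1) % n)) ∧
  M = ⋃ k ∈ Finset.range n, Is k

/-- `B(M, g)`: points of `M` all of whose relatively open neighborhoods in `M` have forward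
orbit with closure equal to `M`. (If infinite, this is a basic set.) -/
def BSet (g : ℝ → ℝ) (M : Set ℝ) : Set ℝ :=
  {x ∈ M | ∀ U : Set ℝ, IsOpen U → x ∈ U → closure (⋃ m : ℕ, g^[m] '' (U ∩ M)) = M}

lemma uIcc_sub {l r s t : ℝ} (hs : s ∈ Icc l r) (ht : t ∈ Icc l r) :
    uIcc s t ⊆ Icc l r := by
  intro x hx
  rcases Set.mem_uIcc.mp hx with ⟨h1, h2⟩ | ⟨h1, h2⟩ <;>
    exact ⟨by rcases hs with ⟨a,b⟩; rcases ht with ⟨c,d⟩; linarith,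
           by rcases hs with ⟨a,b⟩; rcases ht with ⟨c,d⟩; linarith⟩


lemma iterCont {g : ℝ → ℝ} {s : Set ℝ} (hc : ContinuousOn g s) (hm : MapsTo g s s) :
    ∀ n : ℕ, ContinuousOn (g^[n]) s := by
  intro n
  induction n with
  | zero => simpa using continuousOn_id
  | succ n ih =>
    rw [Function.iterate_succ']
    exact hc.comp ih (hm.iterate n)


lemma attains {G : ℝ → ℝ} {zl zr : ℝ} (hc : ContinuousOn G (Icc zl zr)) {u v x : ℝ}
    (hu : u ∈ Icc zl zr) (hv : v ∈ Icc zl zr) (hx : x ∈ uIcc (G u) (G v)) :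
    ∃ p ∈ Icc zl zr, G p = x := by
  have hsub := uIcc_sub hu hv
  obtain ⟨p, hp, hGp⟩ := intermediate_value_uIcc (hc.mono hsub) hx
  exact ⟨p, hsub hp, hGp⟩


lemma signed_mem_uIcc {s w₁ w₂ t t₁ t₂ x0 : ℝ} (hs : s = 1 ∨ s = -1)
    (h₁ : s * (w₁ - x0) ≤ t₁) (h₂ : t₂ ≤ s * (w₂ - x0)) (ht1 : t₁ ≤ t) (ht2 : t ≤ t₂) :
    x0 + s * t ∈ uIcc w₁ w₂ := by
  rcases hs with rfl | rfl <;> rw [Set.mem_uIcc]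
  · left; constructor <;> nlinarith
  · right; constructor <;> nlinarith


lemma sle_abs {s q : ℝ} (hs : s = 1 ∨ s = -1) : s * q ≤ |q| := by
  rcases hs with rfl | rfl <;> simp
  · exact le_abs_self q
  · exact neg_le_abs q


lemma iter_nonconst {g : ℝ → ℝ} {a b : ℝ}
    (hgc : ContinuousOn g (Icc a b)) (hgm : MapsTo g (Icc a b) (Icc a b))
    (hnc : ∀ u v : ℝ, u < v → Set.Icc u v ⊆ Set.Icc a b →
      ∃ s ∈ Set.Icc u v, ∃ t ∈ Set.Icc u v, g s ≠ g t) :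
    ∀ n : ℕ, ∀ u v : ℝ, u < v → Icc u v ⊆ Icc a b →
      ∃ s ∈ Icc u v, ∃ t ∈ Icc u v, g^[n] s ≠ g^[n] t := by
  intro n
  induction n with
  | zero =>
    intro u v huv _
    exact ⟨u, ⟨le_refl u, le_of_lt huv⟩, v, ⟨le_of_lt huv, le_refl v⟩, by
      simpa using ne_of_lt huv⟩
  | succ n ih =>
    intro u v huv hsub
    obtain ⟨s, hs, t, ht, hne⟩ := ih u v huv hsub
    have hps : g^[n] s ∈ Icc a b := hgm.iterate n (hsub hs)
    have hpt : g^[n] t ∈ Icc a b := hgm.iterate n (hsub ht)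
    have hmin : (g^[n] s) ⊓ (g^[n] t) < (g^[n] s) ⊔ (g^[n] t) := min_lt_max.mpr hne
    have hsubpq : Icc ((g^[n] s) ⊓ (g^[n] t)) ((g^[n] s) ⊔ (g^[n] t)) ⊆ Icc a b :=
      Icc_subset_Icc (le_min hps.1 hpt.1) (max_le hps.2 hpt.2)
    obtain ⟨s', hs', t', ht', hne'⟩ := hnc _ _ hmin hsubpq
    have hiv : uIcc (g^[n] s) (g^[n] t) ⊆ g^[n] '' uIcc s t :=
      intermediate_value_uIcc ((iterCont hgc hgm n).mono ((uIcc_sub hs ht).trans hsub))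
    obtain ⟨s2, hs2, hgs2⟩ := hiv hs'
    obtain ⟨t2, ht2, hgt2⟩ := hiv ht'
    refine ⟨s2, uIcc_sub hs ht hs2, t2, uIcc_sub hs ht ht2, ?_⟩
    rw [Function.iterate_succ_apply', Function.iterate_succ_apply', hgs2, hgt2]
    exact hne'


lemma unifClose {f : ℝ → ℝ → ℝ} {a b c d lam0 : ℝ}
    (hmaps : ∀ lam ∈ Set.Ioo c d, Set.MapsTo (f lam) (Set.Icc a b) (Set.Icc a b))
    (hC1 : ContDiffOn ℝ 1 (fun q : ℝ × ℝ => f q.1 q.2) (Set.Ioo c d ×ˢ Set.Icc a b))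
    (hlam0 : lam0 ∈ Set.Ioo c d) :
    ∀ (n : ℕ) (η : ℝ), 0 < η → ∃ r > 0, ∀ lam ∈ Set.Ioo c d, |lam - lam0| < r →
      ∀ x ∈ Icc a b, |(f lam)^[n] x - (f lam0)^[n] x| < η := by
  have hgc : ContinuousOn (f lam0) (Icc a b) := by
    intro x hx
    have : ContinuousWithinAt (fun q : ℝ × ℝ => f q.1 q.2) (Set.Ioo c d ×ˢ Set.Icc a b)
        (lam0, x) := hC1.continuousOn _ (by exact ⟨hlam0, hx⟩)
    have hcomp : ContinuousWithinAt (fun y : ℝ => f lam0 y) (Icc a b) x := by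
      have hmap : MapsTo (fun y : ℝ => ((lam0, y) : ℝ × ℝ)) (Icc a b)
          (Set.Ioo c d ×ˢ Set.Icc a b) := fun y hy => ⟨hlam0, hy⟩
      exact this.comp (Continuous.continuousWithinAt (by continuity)) hmap
    exact hcomp
  -- one-step uniform closeness
  have hone : ∀ η : ℝ, 0 < η → ∃ r > 0, ∀ lam ∈ Set.Ioo c d, |lam - lam0| < r →
      ∀ u ∈ Icc a b, |f lam u - f lam0 u| < η := by
    intro η hη
    obtain ⟨hc, hd⟩ := hlam0
    set c' := (c + lam0) / 2 with hc'
    set d' := (lam0 + d) / 2 with hd'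
    have hK : IsCompact ((Icc c' d') ×ˢ (Icc a b)) := (isCompact_Icc).prod isCompact_Icc
    have hKsub : (Icc c' d') ×ˢ (Icc a b) ⊆ Set.Ioo c d ×ˢ Set.Icc a b := by
      apply Set.prod_mono_left
      intro t ht
      exact ⟨by rcases ht with ⟨h1, h2⟩; simp only [hc'] at h1; linarith,
             by rcases ht with ⟨h1, h2⟩; simp only [hd'] at h2; linarith⟩
    have hucF := hK.uniformContinuousOn_of_continuous (hC1.continuousOn.mono hKsub)
    rw [Metric.uniformContinuousOn_iff] at hucF
    obtain ⟨r1, hr1, hF⟩ := hucF η hη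
    refine ⟨min r1 (min ((lam0 - c)/2) ((d - lam0)/2)), lt_min hr1 (lt_min (by linarith) (by linarith)), ?_⟩
    intro lam hlam hlr u hu
    have h1 : |lam - lam0| < r1 := lt_of_lt_of_le hlr (min_le_left _ _)
    have h2 : |lam - lam0| < (lam0 - c)/2 :=
      lt_of_lt_of_le hlr ((min_le_right _ _).trans (min_le_left _ _))
    have h3 : |lam - lam0| < (d - lam0)/2 :=
      lt_of_lt_of_le hlr ((min_le_right _ _).trans (min_le_right _ _))
    rw [abs_lt] at h2 h3
    have hlmem : lam ∈ Icc c' d' := ⟨by simp only [hc']; linarith, by simp only [hd']; linarith⟩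
    have hl0mem : lam0 ∈ Icc c' d' := ⟨by simp only [hc']; linarith, by simp only [hd']; linarith⟩
    have := hF (lam, u) ⟨hlmem, hu⟩ (lam0, u) ⟨hl0mem, hu⟩ (by
      rw [Prod.dist_eq]
      simp only [Real.dist_eq, sub_self, abs_zero]
      rw [max_eq_left (abs_nonneg _)]
      exact h1)
    simpa [Real.dist_eq] using this
  intro n
  induction n with
  | zero =>
    intro η hη
    exact ⟨1, one_pos, fun lam _ _ x _ => by simpa using hη⟩
  | succ n ih =>
    intro η hη
    -- uniform continuity of f lam0 on Icc a b
    have huc := (isCompact_Icc (a := a) (b := b)).uniformContinuousOn_of_continuous hgc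
    rw [Metric.uniformContinuousOn_iff] at huc
    obtain ⟨θ, hθ, hucg⟩ := huc (η/2) (by positivity)
    obtain ⟨r0, hr0, hone'⟩ := hone (η/2) (by positivity)
    obtain ⟨rI, hrI, hIH⟩ := ih (min θ 1) (by positivity)
    refine ⟨min r0 rI, by positivity, ?_⟩
    intro lam hlam hlr x hx
    have hglm := hmaps lam hlam
    have hg0m := hmaps lam0 hlam0
    have hu1 : (f lam)^[n] x ∈ Icc a b := hglm.iterate n hx
    have hu2 : (f lam0)^[n] x ∈ Icc a b := hg0m.iterate n hx
    have e1 : |f lam ((f lam)^[n] x) - f lam0 ((f lam)^[n] x)| < η/2 :=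
      hone' lam hlam (lt_of_lt_of_le hlr (min_le_left _ _)) _ hu1
    have e2 : |f lam0 ((f lam)^[n] x) - f lam0 ((f lam0)^[n] x)| < η/2 := by
      have hd := hIH lam hlam (lt_of_lt_of_le hlr (min_le_right _ _)) x hx
      have := hucg _ hu1 _ hu2 (by
        rw [Real.dist_eq]
        exact lt_of_lt_of_le hd (min_le_left _ _))
      simpa [Real.dist_eq] using this
    rw [Function.iterate_succ_apply', Function.iterate_succ_apply']
    calc |f lam ((f lam)^[n] x) - f lam0 ((f lam0)^[n] x)|
        ≤ |f lam ((f lam)^[n] x) - f lam0 ((f lam)^[n] x)| +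
          |f lam0 ((f lam)^[n] x) - f lam0 ((f lam0)^[n] x)| := by
          have := abs_sub_abs_le_abs_sub (f lam ((f lam)^[n] x)) (f lam0 ((f lam0)^[n] x))
          exact abs_sub_le _ _ _
      _ < η := by linarith

lemma periodic_chainRecurrent {g : ℝ → ℝ} {p : ℝ} (h : IsPeriodic g p) :
    ChainRecurrent g p := by
  obtain ⟨n, hn, hp⟩ := h
  intro ε hε
  refine ⟨n, hn, fun i => g^[i] p, rfl, hp, fun i hi1 hiN => ?_⟩
  have : g (g^[i-1] p) = g^[i] p := by
    conv_rhs => rw [show i = (i-1) + 1 by omega]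
    rw [Function.iterate_succ_apply' g (i-1) p]
  simp [this, hε]

set_option maxHeartbeats 4000000 in
lemma lemA (f : ℝ → ℝ → ℝ) (a b c d : ℝ) (hab : a < b) (hcd : c < d)
    (hmaps : ∀ lam ∈ Set.Ioo c d, Set.MapsTo (f lam) (Set.Icc a b) (Set.Icc a b))
    (hC1 : ContDiffOn ℝ 1 (fun q : ℝ × ℝ => f q.1 q.2) (Set.Ioo c d ×ˢ Set.Icc a b))
    (hC2 : ∀ lam ∈ Set.Ioo c d, ContDiffOn ℝ 2 (f lam) (Set.Icc a b))
    (lam0 : ℝ) (hlam0 : lam0 ∈ Set.Ioo c d)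
    (hnc : ∀ u v : ℝ, u < v → Set.Icc u v ⊆ Set.Icc a b →
      ∃ s ∈ Set.Icc u v, ∃ t ∈ Set.Icc u v, f lam0 s ≠ f lam0 t)
    (x0 : ℝ) (hx0I : x0 ∈ Set.Icc a b)
    (hfix : f lam0 x0 = x0) (hder : deriv (f lam0) x0 < -1)
    (z : ℕ → ℝ) (hhom : IsHomoclinicOrbit (f lam0) x0 z)
    (K : ℕ) (hK : 1 ≤ K) (y : ℝ) (hy : y = z K) :
    ∀ ε : ℝ, 0 < ε → ∃ r > 0, ∀ lam ∈ Set.Ioo c d, |lam - lam0| < r →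
      ∃ q : ℝ, IsPeriodic (f lam) q ∧ |q - y| < ε := by
  intro ε hε
  obtain ⟨hz0, hzrec, -, hztend⟩ := hhom
  set g : ℝ → ℝ := f lam0 with hgdef
  set m := deriv g x0 with hmdef
  have hm_lt : m < -1 := hder
  have hdiffAt : DifferentiableAt ℝ g x0 := by
    by_contra h
    rw [hmdef, deriv_zero_of_not_differentiableAt h] at hm_lt
    linarith
  have hDA : HasDerivAt g m x0 := by
    rw [hmdef]; exact hdiffAt.hasDerivAt
  have hgc : ContinuousOn g (Icc a b) := (hC2 lam0 hlam0).continuousOn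
  have hgm : MapsTo g (Icc a b) (Icc a b) := hmaps lam0 hlam0
  -- x0 is interior
  have hax0 : a < x0 ∧ x0 < b := by
    have hslope := hasDerivAt_iff_tendsto_slope.mp hDA
    constructor
    · rcases lt_or_eq_of_le hx0I.1 with h | h
      · exact h
      · exfalso
        have hx0b : x0 < b := by rw [← h]; exact hab
        have hmono : Tendsto (slope g x0) (𝓝[>] x0) (𝓝 m) :=
          hslope.mono_left (nhdsWithin_mono _ (fun t ht => ne_of_gt ht))
        have hev : ∀ᶠ t in 𝓝[>] x0, 0 ≤ slope g x0 t := by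
          filter_upwards [Ioo_mem_nhdsGT_of_mem (⟨le_refl x0, hx0b⟩ : x0 ∈ Ico x0 b)] with t ht
          have htI : t ∈ Icc a b := ⟨by rw [h]; exact le_of_lt ht.1, le_of_lt ht.2⟩
          have hgt : g t ∈ Icc a b := hgm htI
          rw [slope_def_field]
          apply div_nonneg
          · rw [hfix, ← h]; linarith [hgt.1]
          · linarith [ht.1]
        have := ge_of_tendsto hmono hev
        linarith
    · rcases lt_or_eq_of_le hx0I.2 with h | h
      · exact h
      · exfalso
        have hx0a : a < x0 := by rw [h]; exact hab
        have hmono : Tendsto (slope g x0) (𝓝[<] x0) (𝓝 m) :=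
          hslope.mono_left (nhdsWithin_mono _ (fun t ht => ne_of_lt ht))
        have hev : ∀ᶠ t in 𝓝[<] x0, 0 ≤ slope g x0 t := by
          filter_upwards [Ioo_mem_nhdsLT_of_mem (⟨hx0a, le_refl x0⟩ : x0 ∈ Ioc a x0)] with t ht
          have htI : t ∈ Icc a b := ⟨le_of_lt ht.1, by rw [← h]; exact le_of_lt ht.2⟩
          have hgt : g t ∈ Icc a b := hgm htI
          rw [slope_def_field]
          apply div_nonneg_iff.mpr
          refine Or.inr ⟨?_, ?_⟩
          · rw [hfix, h]; linarith [hgt.2]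
          · linarith [ht.2]
        have := ge_of_tendsto hmono hev
        linarith
  -- constants
  set ε₁ := (-1 - m)/2 with hε₁def
  set ρ := (1 - m)/2 with hρdef
  set ρ₂ := (-1 - 3*m)/2 with hρ₂def
  have hε₁ : 0 < ε₁ := by rw [hε₁def]; linarith
  have hρ : 1 < ρ := by rw [hρdef]; linarith
  have hρρ₂ : ρ < ρ₂ := by rw [hρdef, hρ₂def]; linarith
  have hρ₂pos : 0 < ρ₂ := by linarith
  -- δ with the pinching estimate
  obtain ⟨δ, hδpos, hδa, hδb, hb⟩ :
      ∃ δ : ℝ, 0 < δ ∧ δ ≤ x0 - a ∧ δ ≤ b - x0 ∧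
        ∀ x : ℝ, |x - x0| ≤ δ → |g x - x0 - m * (x - x0)| ≤ ε₁ * |x - x0| := by
    have hlo := hasDerivAt_iff_isLittleO.mp hDA
    have hbound := (Asymptotics.isLittleO_iff.mp hlo) hε₁
    rw [Metric.eventually_nhds_iff] at hbound
    obtain ⟨δ', hδ', hbd⟩ := hbound
    refine ⟨min (δ'/2) (min (x0 - a) (b - x0)), ?_, ?_, ?_, ?_⟩
    · exact lt_min (by linarith) (lt_min (by linarith [hax0.1]) (by linarith [hax0.2]))
    · exact (min_le_right _ _).trans (min_le_left _ _)
    · exact (min_le_right _ _).trans (min_le_right _ _)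
    · intro x hx
      have hxd : dist x x0 < δ' := by
        rw [Real.dist_eq]
        calc |x - x0| ≤ min (δ'/2) (min (x0 - a) (b - x0)) := hx
          _ ≤ δ'/2 := min_le_left _ _
          _ < δ' := by linarith
      have := hbd hxd
      rw [Real.norm_eq_abs, Real.norm_eq_abs, hfix] at this
      calc |g x - x0 - m * (x - x0)| = |g x - x0 - (x - x0) * m| := by ring_nf
        _ ≤ ε₁ * |x - x0| := by
            have h2 : (x - x0) • m = (x - x0) * m := rfl
            rw [h2] at this
            exact this
  have hIccδ : ∀ x : ℝ, |x - x0| ≤ δ → x ∈ Icc a b := by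
    intro x hx
    rw [abs_le] at hx
    exact ⟨by linarith [hx.1], by linarith [hx.2]⟩
  have hpinch : ∀ s dd : ℝ, (s = 1 ∨ s = -1) → 0 < dd → dd ≤ δ →
      ρ * dd ≤ -s * (g (x0 + s*dd) - x0) ∧ -s * (g (x0 + s*dd) - x0) ≤ ρ₂ * dd := by
    intro s dd hs hdd hddδ
    have habs : |x0 + s*dd - x0| = dd := by
      have he : x0 + s*dd - x0 = s * dd := by ring
      rw [he, abs_mul]
      rcases hs with rfl | rfl <;> simp [abs_of_pos hdd]
    have hbb := hb (x0 + s*dd) (by rw [habs]; exact hddδ)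
    rw [habs] at hbb
    have : x0 + s * dd - x0 = s * dd := by ring
    rw [this] at hbb
    rw [abs_le] at hbb
    rcases hs with rfl | rfl
    · constructor <;> nlinarith [hbb.1, hbb.2, hρdef, hρ₂def, hε₁def]
    · constructor <;> nlinarith [hbb.1, hbb.2, hρdef, hρ₂def, hε₁def]
  -- basic facts about z
  have hziter : ∀ k j : ℕ, g^[j] (z (k + j)) = z k := by
    intro k j
    induction j with
    | zero => simp
    | succ j ih =>
      rw [show k + (j+1) = (k+j) + 1 by ring, Function.iterate_succ_apply, hzrec (k+j)]
      exact ih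
  have hfix_iter : ∀ j : ℕ, g^[j] x0 = x0 := by
    intro j
    induction j with
    | zero => simp
    | succ j ih => rw [Function.iterate_succ_apply', ih]; exact hfix
  have hKy2 : g^[K] y = x0 := by
    rw [hy]
    have := hziter 0 K
    simpa [hz0] using this
  have htend := Metric.tendsto_atTop.mp hztend
  obtain ⟨k₀, hk₀⟩ := htend δ hδpos
  have hzmem : ∀ k, z k ∈ Icc a b := by
    intro k
    rcases le_or_gt k₀ k with h | h
    · exact hIccδ _ (le_of_lt (by rw [← Real.dist_eq]; exact hk₀ k h))
    · have hzk : z k = g^[k₀ - k] (z k₀) := by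
        have := hziter k (k₀ - k)
        rw [show k + (k₀ - k) = k₀ by omega] at this
        exact this.symm
      rw [hzk]
      exact hgm.iterate _ (hIccδ _ (le_of_lt (by rw [← Real.dist_eq]; exact hk₀ k₀ le_rfl)))
  by_cases hyx : y = x0
  · -- easy case: y = x0, persistence of the fixed point
    set β := min δ ε / 2 with hβdef
    have hβpos : 0 < β := by rw [hβdef]; positivity
    have hβδ : β ≤ δ := by
      rw [hβdef]
      have : min δ ε ≤ δ := min_le_left _ _
      linarith
    have hβε : β < ε := by
      rw [hβdef]
      have : min δ ε ≤ ε := min_le_right _ _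
      linarith
    obtain ⟨r, hr, hcl⟩ := unifClose hmaps hC1 hlam0 1 β hβpos
    refine ⟨r, hr, ?_⟩
    intro lam hlam hlr
    have hcl1 : ∀ x ∈ Icc a b, |f lam x - g x| < β := by
      intro x hx
      simpa using hcl lam hlam hlr x hx
    have hp1 : x0 + β ∈ Icc a b := hIccδ _ (by rw [show x0 + β - x0 = β by ring, abs_of_pos hβpos]; exact hβδ)
    have hm1 : x0 - β ∈ Icc a b := hIccδ _ (by rw [show x0 - β - x0 = -β by ring, abs_neg, abs_of_pos hβpos]; exact hβδ)
    have hR : g (x0 + β) ≤ x0 - ρ*β := by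
      have := (hpinch 1 β (Or.inl rfl) hβpos hβδ).1
      rw [one_mul] at this
      nlinarith [this]
    have hL : x0 + ρ*β ≤ g (x0 - β) := by
      have := (hpinch (-1) β (Or.inr rfl) hβpos hβδ).1
      have he : x0 + (-1)*β = x0 - β := by ring
      rw [he] at this
      nlinarith [this]
    set φ := fun x : ℝ => f lam x - x with hφdef
    have hφc : ContinuousOn φ (uIcc (x0 - β) (x0 + β)) :=
      (((hC2 lam hlam).continuousOn.mono (uIcc_sub hm1 hp1)).sub continuousOn_id)
    have h1 : φ (x0 + β) < 0 := by
      have hcb := hcl1 _ hp1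
      rw [abs_lt] at hcb
      simp only [hφdef]
      nlinarith [hcb.1, hcb.2, hR, hβpos, hρ]
    have h2 : 0 < φ (x0 - β) := by
      have hcb := hcl1 _ hm1
      rw [abs_lt] at hcb
      simp only [hφdef]
      nlinarith [hcb.1, hcb.2, hL, hβpos, hρ]
    have h0 : (0:ℝ) ∈ uIcc (φ (x0 - β)) (φ (x0 + β)) := by
      rw [Set.mem_uIcc]
      right
      exact ⟨le_of_lt h1, le_of_lt h2⟩
    obtain ⟨p, hpmem, hφp⟩ := intermediate_value_uIcc hφc h0
    have hpIcc : p ∈ Icc (x0 - β) (x0 + β) := by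
      rw [← uIcc_of_le (by linarith : x0 - β ≤ x0 + β)]
      exact hpmem
    refine ⟨p, ⟨1, le_refl 1, ?_⟩, ?_⟩
    · simp only [Function.iterate_one]
      simp only [hφdef] at hφp
      linarith [hφp]
    · rw [hyx]
      rw [abs_lt]
      rcases hpIcc with ⟨hp1', hp2'⟩
      constructor <;> nlinarith [hβε, hβpos]
  · -- main case
    have hzne : ∀ k, K ≤ k → z k ≠ x0 := by
      intro k hk hzk
      apply hyx
      have h1 := hziter K (k - K)
      rw [show K + (k - K) = k by omega, hzk] at h1
      rw [hy, ← h1, hfix_iter]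
    -- expansion constants
    set ν := (ρ - 1)/(2*ρ) with hνdef
    have hρpos : (0:ℝ) < ρ := by linarith
    have hν0 : 0 < ν := by rw [hνdef]; apply div_pos (by linarith) (by linarith)
    have hν1 : ν < 1 := by
      rw [hνdef, div_lt_one (by positivity)]
      linarith
    set ρ' := ρ * (1 - ν) with hρ'def
    have hρ'1 : 1 < ρ' := by
      rw [hρ'def, hνdef]
      rw [show ρ * (1 - (ρ - 1) / (2 * ρ)) = ρ - (ρ - 1)/2 by field_simp]
      linarith
    set ρ₂' := ρ₂ * (1 + ν) with hρ₂'def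
    have hρ₂'1 : 1 < ρ₂' := by rw [hρ₂'def]; nlinarith
    have hρ₂ρ₂' : ρ₂ < ρ₂' := by rw [hρ₂'def]; nlinarith
    have hρ₂'pos : 0 < ρ₂' := by linarith
    -- pick zz near x0 on the homoclinic orbit
    obtain ⟨k₂', hk₂'⟩ := htend (δ/2) (by positivity)
    set k₂ := max k₂' K with hk₂def
    have hk₂K : K ≤ k₂ := le_max_right _ _
    set zz := z k₂ with hzzdef
    have hzzd : dist zz x0 < δ/2 := hk₂' k₂ (le_max_left _ _)
    set ζ := |zz - x0| with hζdef
    have hζpos : 0 < ζ := abs_pos.mpr (sub_ne_zero.mpr (hzne k₂ hk₂K))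
    have hζδ : ζ < δ/2 := by rw [hζdef, ← Real.dist_eq]; exact hzzd
    set s := if x0 < zz then (1:ℝ) else -1 with hsdef
    have hs : s = 1 ∨ s = -1 := by
      by_cases h : x0 < zz <;> simp [hsdef, h]
    have hss : s * s = 1 := by rcases hs with h | h <;> rw [h] <;> norm_num
    have hszz : s * (zz - x0) = ζ := by
      rw [hsdef, hζdef]
      by_cases h : x0 < zz
      · rw [if_pos h, abs_of_pos (by linarith), one_mul]
      · have hlt : zz < x0 := lt_of_le_of_ne (not_lt.mp h) (hzne k₂ hk₂K)
        rw [if_neg h, abs_of_neg (by linarith)]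
        ring
    -- continuity choice of η'
    have hcw : ContinuousWithinAt (g^[k₂ - K]) (Icc a b) zz :=
      (iterCont hgc hgm _).continuousWithinAt (hzmem k₂)
    rw [Metric.continuousWithinAt_iff] at hcw
    obtain ⟨η₀, hη₀, hcont⟩ := hcw (ε/2) (by positivity)
    set η' := min (η₀/2) (ζ/2) with hη'def
    have hη'pos : 0 < η' := lt_min (by positivity) (by positivity)
    have hη'ζ : η' ≤ ζ/2 := min_le_right _ _
    have hη'η₀ : η' < η₀ := lt_of_le_of_lt (min_le_left _ _) (by linarith)
    have hgzzy : g^[k₂ - K] zz = y := by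
      have h1 := hziter K (k₂ - K)
      rw [show K + (k₂ - K) = k₂ by omega] at h1
      rw [hzzdef, h1, hy]
    set Zl := zz - η' with hZldef
    set Zr := zz + η' with hZrdef
    have hZlr : Zl < Zr := by rw [hZldef, hZrdef]; linarith
    have hZabs : ∀ x ∈ Icc Zl Zr, |x - x0| ≤ δ := by
      intro x hx
      rcases hx with ⟨h1, h2⟩
      rw [hZldef] at h1; rw [hZrdef] at h2
      calc |x - x0| ≤ |x - zz| + |zz - x0| := abs_sub_le x zz x0
        _ ≤ η' + ζ := by
            apply add_le_add _ (le_of_eq hζdef.symm)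
            rw [abs_le]; constructor <;> linarith
        _ ≤ δ := by linarith
    have hZsub : Icc Zl Zr ⊆ Icc a b := fun x hx => hIccδ x (hZabs x hx)
    have hζη'δ : ζ + η' < δ := by linarith
    have hζη'0 : 0 < ζ - η' := by linarith
    have hzzZ : zz ∈ Icc Zl Zr := ⟨by rw [hZldef]; linarith, by rw [hZrdef]; linarith⟩
    -- a point of Z whose k₂-iterate is away from x0
    obtain ⟨s₁, hs₁, t₁, ht₁, hne₁⟩ := iter_nonconst hgc hgm hnc k₂ Zl Zr hZlr hZsub
    obtain ⟨w₀, hw₀Z, hw₀⟩ : ∃ w₀ ∈ Icc Zl Zr, g^[k₂] w₀ ≠ x0 := by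
      by_cases h : g^[k₂] s₁ = x0
      · exact ⟨t₁, ht₁, fun ht => hne₁ (h.trans ht.symm)⟩
      · exact ⟨s₁, hs₁, h⟩
    set w := g^[k₂] w₀ with hwdef
    set σ := if x0 < w then (1:ℝ) else -1 with hσdef
    have hσ : σ = 1 ∨ σ = -1 := by by_cases h : x0 < w <;> simp [hσdef, h]
    have hσσ : σ * σ = 1 := by rcases hσ with h | h <;> rw [h] <;> norm_num
    have hσw : σ * (w - x0) = |w - x0| := by
      rw [hσdef]
      by_cases h : x0 < w
      · rw [if_pos h, abs_of_pos (by linarith), one_mul]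
      · have hlt : w < x0 := lt_of_le_of_ne (not_lt.mp h) hw₀
        rw [if_neg h, abs_of_neg (by linarith)]
        ring
    set t₀ := min |w - x0| δ with ht₀def
    have ht₀pos : 0 < t₀ := lt_min (abs_pos.mpr (sub_ne_zero.mpr hw₀)) hδpos
    have ht₀δ : t₀ ≤ δ := min_le_right _ _
    set β₀ := t₀ / 2 with hβ₀def
    have hβ₀pos : 0 < β₀ := by rw [hβ₀def]; linarith
    have hβ₀δ : β₀ ≤ δ := by rw [hβ₀def]; linarith
    have hgk₂zz : g^[k₂] zz = x0 := by
      have h1 := hziter 0 k₂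
      rw [zero_add] at h1
      rw [hzzdef, h1, hz0]
    -- attain x0 + σ * t₀
    obtain ⟨v, hvZ, hgv⟩ : ∃ v ∈ Icc Zl Zr, g^[k₂] v = x0 + σ * t₀ := by
      apply attains ((iterCont hgc hgm k₂).mono hZsub) hzzZ hw₀Z
      rw [hgk₂zz]
      refine signed_mem_uIcc hσ (t₁ := t₀) (t₂ := t₀) ?_ ?_ le_rfl le_rfl
      · simp
        linarith
      · rw [← hwdef, hσw]
        exact min_le_left _ _
    -- number of expansion steps
    obtain ⟨kd, hkd⟩ := pow_unbounded_of_one_lt (δ / β₀) hρ'1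
    have hkd' : δ ≤ β₀ * ρ'^kd := by
      rw [div_lt_iff₀ hβ₀pos, mul_comm] at hkd
      exact le_of_lt hkd
    set M := if σ * (-1)^(kd+1) = s then kd + 1 else kd + 2 with hMdef
    have hM1 : 1 ≤ M := by rw [hMdef]; split <;> omega
    have hMkd : kd + 1 ≤ M := by rw [hMdef]; split <;> omega
    have hpm : ∀ n : ℕ, ((-1:ℝ))^n = 1 ∨ ((-1:ℝ))^n = -1 := fun n =>
      n.even_or_odd.elim (fun h => Or.inl h.neg_one_pow) (fun h => Or.inr h.neg_one_pow)
    have hσM : σ * (-1)^M = s := by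
      by_cases h : σ * (-1)^(kd+1) = s
      · rw [hMdef, if_pos h]; exact h
      · rw [hMdef, if_neg h, pow_succ]
        have hval : σ * (-1:ℝ)^(kd+1) = 1 ∨ σ * (-1:ℝ)^(kd+1) = -1 := by
          rcases hσ with h3 | h3 <;> rcases hpm (kd+1) with h5 | h5 <;> rw [h3, h5] <;> norm_num
        have h2 : σ * (-1:ℝ)^(kd+1) = -s := by
          rcases hval with hv | hv <;> rcases hs with h4 | h4
          · exact absurd (hv.trans h4.symm) h
          · simp [hv, h4]
          · simp [hv, h4]
          · exact absurd (hv.trans h4.symm) h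
        linear_combination -h2
    set sg : ℕ → ℝ := fun j => σ * (-1)^j with hsgdef
    have hsgn : ∀ j, sg j = 1 ∨ sg j = -1 := by
      intro j
      rcases hσ with h3 | h3 <;> rcases hpm j with h5 | h5 <;> simp [hsgdef, h3, h5]
    have hsg_succ : ∀ j, sg (j+1) = -sg j := by
      intro j
      simp only [hsgdef, pow_succ]
      ring
    -- the interval sequences
    set α₀ := min β₀ ((ζ - η')/(2*ρ₂)) / ρ₂'^(M+1) with hα₀def
    have hα₀pos : 0 < α₀ := by
      rw [hα₀def]
      apply div_pos (lt_min hβ₀pos (by positivity)) (by positivity)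
    set A : ℕ → ℝ := fun j => α₀ * ρ₂'^j with hAdef
    set B : ℕ → ℝ := fun j => min (β₀ * ρ'^j) δ with hBdef
    have hApos : ∀ j, 0 < A j := fun j => by simp only [hAdef]; positivity
    have hBpos : ∀ j, 0 < B j := fun j => lt_min (by positivity) hδpos
    have hAcap : ∀ j, j ≤ M + 1 → A j ≤ min β₀ ((ζ - η')/(2*ρ₂)) := by
      intro j hj
      have h1 : A j ≤ α₀ * ρ₂'^(M+1) := by
        simp only [hAdef]
        exact mul_le_mul_of_nonneg_left (pow_le_pow_right₀ (le_of_lt hρ₂'1) hj) hα₀pos.le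
      have h2 : α₀ * ρ₂'^(M+1) = min β₀ ((ζ - η')/(2*ρ₂)) := by
        rw [hα₀def, div_mul_cancel₀ _ (ne_of_gt (pow_pos (by linarith : (0:ℝ) < ρ₂') (M+1)))]
      linarith
    have hAβ₀ : ∀ j, j ≤ M + 1 → A j ≤ β₀ := fun j hj => (hAcap j hj).trans (min_le_left _ _)
    have hAζ : ∀ j, j ≤ M + 1 → ρ₂ * A j ≤ (ζ - η')/2 := by
      intro j hj
      have h1 := (hAcap j hj).trans (min_le_right _ _)
      have h2 : ρ₂ * A j ≤ ρ₂ * ((ζ - η')/(2*ρ₂)) := mul_le_mul_of_nonneg_left h1 hρ₂pos.le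
      have h3 : ρ₂ * ((ζ - η')/(2*ρ₂)) = (ζ - η')/2 := by
        rw [mul_div_assoc']
        rw [show ρ₂ * (ζ - η') = (ζ - η') * ρ₂ by ring, show (2:ℝ) * ρ₂ = ρ₂ * 2 by ring]
        rw [mul_comm (ζ - η') ρ₂, mul_div_mul_left _ _ (ne_of_gt hρ₂pos)]
      linarith
    have hAδ : ∀ j, j ≤ M + 1 → A j ≤ δ := fun j hj => (hAβ₀ j hj).trans hβ₀δ
    have hBlb : ∀ j, β₀ ≤ B j := by
      intro j
      apply le_min _ hβ₀δ
      have h1 : (1:ℝ) ≤ ρ'^j := by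
        have := pow_le_pow_right₀ (le_of_lt hρ'1) (Nat.zero_le j)
        simpa using this
      exact le_mul_of_one_le_right hβ₀pos.le h1
    have hAB : ∀ j, j ≤ M + 1 → A j ≤ B j := fun j hj => (hAβ₀ j hj).trans (hBlb j)
    have hBub : ∀ j, B j ≤ δ := fun j => min_le_right _ _
    have hA0 : α₀ ≤ A 0 := by simp [hAdef]
    have hAlb : ∀ j, α₀ ≤ A j := by
      intro j
      simp only [hAdef]
      have h1 : (1:ℝ) ≤ ρ₂'^j := by
        have := pow_le_pow_right₀ (le_of_lt hρ₂'1) (Nat.zero_le j)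
        simpa using this
      exact le_mul_of_one_le_right hα₀pos.le h1
    have hBstep : ∀ j, B (j+1) ≤ ρ' * B j := by
      intro j
      rcases le_total (β₀ * ρ'^j) δ with h | h
      · calc B (j+1) ≤ β₀ * ρ'^(j+1) := min_le_left _ _
          _ = ρ' * (β₀ * ρ'^j) := by rw [pow_succ]; ring
          _ = ρ' * B j := by rw [hBdef]; simp only []; rw [min_eq_left h]
      · calc B (j+1) ≤ δ := min_le_right _ _
          _ ≤ ρ' * δ := le_mul_of_one_le_left hδpos.le hρ'1.le
          _ = ρ' * B j := by rw [hBdef]; simp only []; rw [min_eq_right h]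
    have hBkd : ∀ j, kd ≤ j → B j = δ := by
      intro j hj
      apply min_eq_right
      calc δ ≤ β₀ * ρ'^kd := hkd'
        _ ≤ β₀ * ρ'^j := by
            apply mul_le_mul_of_nonneg_left (pow_le_pow_right₀ (le_of_lt hρ'1) hj) hβ₀pos.le
    -- the closeness margin
    set γ := min (min α₀ (ρ₂ * ν * α₀)) (min (min (ρ * ν * β₀) β₀)
      (min ((ρ-1)*δ) (min ((ζ - η')/2) (ε/2)))) with hγdef
    have hγpos : 0 < γ := by
      rw [hγdef]
      refine lt_min (lt_min hα₀pos (by positivity)) (lt_min (lt_min (by positivity) hβ₀pos)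
        (lt_min (mul_pos (by linarith) hδpos) (lt_min (by linarith) (by positivity))))
    have hγα₀ : γ ≤ α₀ := le_trans (min_le_left _ _) (min_le_left _ _)
    have hγρ₂ν : γ ≤ ρ₂ * ν * α₀ := le_trans (min_le_left _ _) (min_le_right _ _)
    have hγρν : γ ≤ ρ * ν * β₀ :=
      le_trans (min_le_right _ _) (le_trans (min_le_left _ _) (min_le_left _ _))
    have hγβ₀ : γ ≤ β₀ :=
      le_trans (min_le_right _ _) (le_trans (min_le_left _ _) (min_le_right _ _))
    have hγρδ : γ ≤ (ρ-1)*δ :=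
      le_trans (min_le_right _ _) (le_trans (min_le_right _ _) (min_le_left _ _))
    have hγζ : γ ≤ (ζ - η')/2 :=
      le_trans (min_le_right _ _) (le_trans (min_le_right _ _)
        (le_trans (min_le_right _ _) (min_le_left _ _)))
    have hγε : γ ≤ ε/2 :=
      le_trans (min_le_right _ _) (le_trans (min_le_right _ _)
        (le_trans (min_le_right _ _) (min_le_right _ _)))
    clear_value ν ρ' ρ₂' zz ζ s η' Zl Zr w σ t₀ β₀ sg α₀ A B γ
    -- uniform closeness radii
    obtain ⟨r₁, hr₁, hcl1'⟩ := unifClose hmaps hC1 hlam0 1 γ hγpos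
    obtain ⟨r₂, hr₂, hcl2'⟩ := unifClose hmaps hC1 hlam0 k₂ γ hγpos
    obtain ⟨r₃, hr₃, hcl3'⟩ := unifClose hmaps hC1 hlam0 (k₂ - K) (ε/2) (by positivity)
    refine ⟨min r₁ (min r₂ r₃), lt_min hr₁ (lt_min hr₂ hr₃), ?_⟩
    intro lam hlam hlr
    set gl : ℝ → ℝ := f lam with hgldef
    have hc1 : ∀ x ∈ Icc a b, |gl x - g x| < γ := by
      intro x hx
      simpa using hcl1' lam hlam (lt_of_lt_of_le hlr (min_le_left _ _)) x hx
    have hc2 : ∀ x ∈ Icc a b, |gl^[k₂] x - g^[k₂] x| < γ := fun x hx =>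
      hcl2' lam hlam (lt_of_lt_of_le hlr ((min_le_right _ _).trans (min_le_left _ _))) x hx
    have hc3 : ∀ x ∈ Icc a b, |gl^[k₂ - K] x - g^[k₂ - K] x| < ε/2 := fun x hx =>
      hcl3' lam hlam (lt_of_lt_of_le hlr ((min_le_right _ _).trans (min_le_right _ _))) x hx
    have hglc : ContinuousOn gl (Icc a b) := (hC2 lam hlam).continuousOn
    have hglm : MapsTo gl (Icc a b) (Icc a b) := hmaps lam hlam
    -- the covering invariant
    have hP0 : (∃ u ∈ Icc Zl Zr, gl^[k₂ + 0] u = x0 + sg 0 * A 0) ∧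
        (∃ u ∈ Icc Zl Zr, gl^[k₂ + 0] u = x0 + sg 0 * B 0) := by
      have hw₁ : |gl^[k₂] zz - x0| < γ := by
        have h1 := hc2 zz (hZsub hzzZ)
        rwa [hgk₂zz] at h1
      have hw₂ : t₀ - γ ≤ σ * (gl^[k₂] v - x0) := by
        have hcv := hc2 v (hZsub hvZ)
        have h1 : σ * (gl^[k₂] v - x0) =
            t₀ + σ * (gl^[k₂] v - g^[k₂] v) := by
          rw [hgv]
          linear_combination t₀ * hσσ
        have h2 : σ * (gl^[k₂] v - g^[k₂] v) ≥ -γ := by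
          have h3 := sle_abs (q := -(gl^[k₂] v - g^[k₂] v)) hσ
          rw [abs_neg, mul_neg] at h3
          linarith [hcv]
        linarith
      have hB0 : B 0 = β₀ := by
        simp only [hBdef, pow_zero, mul_one]
        exact min_eq_left hβ₀δ
      have hsg0 : sg 0 = σ := by simp [hsgdef]
      have hnear : σ * (gl^[k₂] zz - x0) ≤ A 0 := by
        have h1 := sle_abs (q := gl^[k₂] zz - x0) hσ
        have h2 : α₀ ≤ A 0 := hA0
        linarith [le_of_lt hw₁, hγα₀]
      have hfar : B 0 ≤ σ * (gl^[k₂] v - x0) := by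
        rw [hB0]
        have h4 : t₀ - γ ≥ β₀ := by linarith [hγβ₀, hβ₀def]
        linarith
      constructor
      · obtain ⟨p, hp, hgp⟩ := attains ((iterCont hglc hglm k₂).mono hZsub) hzzZ hvZ
          (signed_mem_uIcc hσ hnear hfar le_rfl (hAB 0 (by omega)))
        rw [hsg0]
        exact ⟨p, hp, by simpa using hgp⟩
      · obtain ⟨p, hp, hgp⟩ := attains ((iterCont hglc hglm k₂).mono hZsub) hzzZ hvZ
          (signed_mem_uIcc hσ hnear hfar (hAB 0 (by omega)) le_rfl)
        rw [hsg0]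
        exact ⟨p, hp, by simpa using hgp⟩
        -- one perturbed expansion step
    have hstep : ∀ (j : ℕ) (dd : ℝ), 0 < dd → dd ≤ δ → ∀ u ∈ Icc Zl Zr,
        gl^[k₂ + j] u = x0 + sg j * dd →
        (ρ * dd - γ ≤ sg (j+1) * (gl^[k₂ + (j+1)] u - x0) ∧
         sg (j+1) * (gl^[k₂ + (j+1)] u - x0) ≤ ρ₂ * dd + γ) := by
      intro j dd hdd hddδ u huZ hu
      have hiter : gl^[k₂ + (j+1)] u = gl (x0 + sg j * dd) := by
        rw [show k₂ + (j+1) = (k₂ + j) + 1 by ring, Function.iterate_succ_apply', hu]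
      have habs2 : |sg j| = 1 := by rcases hsgn j with h | h <;> rw [h] <;> norm_num
      have heI : x0 + sg j * dd ∈ Icc a b := by
        apply hIccδ
        rw [show x0 + sg j * dd - x0 = sg j * dd by ring, abs_mul, habs2, one_mul,
          abs_of_pos hdd]
        exact hddδ
      have hpin := hpinch (sg j) dd (hsgn j) hdd hddδ
      have hcl := hc1 _ heI
      rw [abs_lt] at hcl
      rw [hiter, hsg_succ j]
      rcases hsgn j with h | h <;> rw [h] at hpin hcl ⊢ <;>
        constructor <;> [linarith [hpin.1, hcl.1, hcl.2]; linarith [hpin.2, hcl.1, hcl.2];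
          linarith [hpin.1, hcl.1, hcl.2]; linarith [hpin.2, hcl.1, hcl.2]]
    -- the inductive covering
    have hPstep : ∀ j, j + 1 ≤ M →
        ((∃ u ∈ Icc Zl Zr, gl^[k₂ + j] u = x0 + sg j * A j) ∧
         (∃ u ∈ Icc Zl Zr, gl^[k₂ + j] u = x0 + sg j * B j)) →
        ((∃ u ∈ Icc Zl Zr, gl^[k₂ + (j+1)] u = x0 + sg (j+1) * A (j+1)) ∧
         (∃ u ∈ Icc Zl Zr, gl^[k₂ + (j+1)] u = x0 + sg (j+1) * B (j+1))) := by
      rintro j hj ⟨⟨u₁, hu₁Z, hu₁⟩, ⟨u₂, hu₂Z, hu₂⟩⟩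
      have hjM1 : j ≤ M + 1 := by omega
      have hnear' : sg (j+1) * (gl^[k₂ + (j+1)] u₁ - x0) ≤ A (j+1) := by
        have h1 := (hstep j (A j) (hApos j) (hAδ j hjM1) u₁ hu₁Z hu₁).2
        have hA1 : A (j+1) = ρ₂' * A j := by
          simp only [hAdef, pow_succ]; ring
        have h2 : ρ₂ * ν * α₀ ≤ ρ₂ * ν * A j :=
          mul_le_mul_of_nonneg_left (hAlb j) (mul_nonneg (by linarith) (by linarith))
        have h3 : ρ₂ * A j + γ ≤ A (j+1) := by
          rw [hA1, hρ₂'def]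
          linarith [h2, hγρ₂ν]
        linarith
      have hfar' : B (j+1) ≤ sg (j+1) * (gl^[k₂ + (j+1)] u₂ - x0) := by
        have h1 := (hstep j (B j) (hBpos j) (hBub j) u₂ hu₂Z hu₂).1
        have h2 : ρ * ν * β₀ ≤ ρ * ν * B j :=
          mul_le_mul_of_nonneg_left (hBlb j) (mul_nonneg (by linarith) (by linarith))
        have h3 : B (j+1) ≤ ρ * B j - γ := by
          have h4 := hBstep j
          rw [hρ'def] at h4
          linarith [hγρν, h2, h4]
        linarith
      constructor
      · obtain ⟨p, hp, hgp⟩ := attains ((iterCont hglc hglm (k₂ + (j+1))).mono hZsub) hu₁Z hu₂Z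
          (signed_mem_uIcc (hsgn (j+1)) hnear' hfar' le_rfl (hAB (j+1) (by omega)))
        exact ⟨p, hp, hgp⟩
      · obtain ⟨p, hp, hgp⟩ := attains ((iterCont hglc hglm (k₂ + (j+1))).mono hZsub) hu₁Z hu₂Z
          (signed_mem_uIcc (hsgn (j+1)) hnear' hfar' (hAB (j+1) (by omega)) le_rfl)
        exact ⟨p, hp, hgp⟩
    have hPle : ∀ j, j ≤ M - 1 →
        ((∃ u ∈ Icc Zl Zr, gl^[k₂ + j] u = x0 + sg j * A j) ∧
         (∃ u ∈ Icc Zl Zr, gl^[k₂ + j] u = x0 + sg j * B j)) := by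
      intro j
      induction j with
      | zero => intro _; exact hP0
      | succ j ih =>
        intro hj
        exact hPstep j (by omega) (ih (by omega))
    obtain ⟨⟨u₁, hu₁Z, hu₁⟩, ⟨u₂, hu₂Z, hu₂⟩⟩ := hPle (M - 1) le_rfl
    have hnearF := (hstep (M-1) (A (M-1)) (hApos _) (hAδ _ (by omega)) u₁ hu₁Z hu₁).2
    have hfarF := (hstep (M-1) (B (M-1)) (hBpos _) (hBub _) u₂ hu₂Z hu₂).1
    have hM1' : (M - 1) + 1 = M := by omega
    rw [hM1'] at hnearF hfarF
    have hsgM : sg M = s := by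
      rw [hsgdef]
      exact hσM
    rw [hsgM] at hnearF hfarF
    have hnearB : s * (gl^[k₂ + M] u₁ - x0) ≤ ζ - η' := by
      have h1 := hAζ (M-1) (by omega)
      linarith [hγζ, hnearF]
    have hfarB : ζ + η' ≤ s * (gl^[k₂ + M] u₂ - x0) := by
      have h1 : B (M-1) = δ := hBkd (M-1) (by omega)
      rw [h1] at hfarF
      linarith [hγρδ, hζη'δ, hfarF]
    have hkey : ∀ q : ℝ, x0 + s * (s * (q - x0)) = q := by
      intro q
      linear_combination (q - x0) * hss
    have hZlt : ζ - η' ≤ s * (Zl - x0) ∧ s * (Zl - x0) ≤ ζ + η' := by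
      have h1 : s * (Zl - x0) = ζ - s * η' := by
        rw [hZldef]
        linear_combination hszz
      rw [h1]
      rcases hs with h | h <;> rw [h] <;> constructor <;> linarith
    have hZrt : ζ - η' ≤ s * (Zr - x0) ∧ s * (Zr - x0) ≤ ζ + η' := by
      have h1 : s * (Zr - x0) = ζ + s * η' := by
        rw [hZrdef]
        linear_combination hszz
      rw [h1]
      rcases hs with h | h <;> rw [h] <;> constructor <;> linarith
    have hmem₁ : Zl ∈ uIcc (gl^[k₂ + M] u₁) (gl^[k₂ + M] u₂) := by
      have h := signed_mem_uIcc hs hnearB hfarB hZlt.1 hZlt.2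
      rwa [hkey Zl] at h
    have hmem₂ : Zr ∈ uIcc (gl^[k₂ + M] u₁) (gl^[k₂ + M] u₂) := by
      have h := signed_mem_uIcc hs hnearB hfarB hZrt.1 hZrt.2
      rwa [hkey Zr] at h
    obtain ⟨p₁, hp₁Z, hgp₁⟩ := attains ((iterCont hglc hglm (k₂ + M)).mono hZsub) hu₁Z hu₂Z hmem₁
    obtain ⟨p₂, hp₂Z, hgp₂⟩ := attains ((iterCont hglc hglm (k₂ + M)).mono hZsub) hu₁Z hu₂Z hmem₂
    set N := k₂ + M with hNdef
    have hφc : ContinuousOn (fun x => gl^[N] x - x) (uIcc p₁ p₂) :=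
      ((iterCont hglc hglm N).mono ((uIcc_sub hp₁Z hp₂Z).trans hZsub)).sub continuousOn_id
    have h0m : (0:ℝ) ∈ uIcc ((fun x => gl^[N] x - x) p₁) ((fun x => gl^[N] x - x) p₂) := by
      rw [Set.mem_uIcc]
      left
      simp only
      rw [hgp₁, hgp₂]
      exact ⟨by linarith [hp₁Z.1], by linarith [hp₂Z.2]⟩
    obtain ⟨p, hpm, hφp⟩ := intermediate_value_uIcc hφc h0m
    have hpZ : p ∈ Icc Zl Zr := (uIcc_sub hp₁Z hp₂Z) hpm
    have hpfix : gl^[N] p = p := by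
      have := sub_eq_zero.mp hφp
      exact this
    refine ⟨gl^[k₂ - K] p, ⟨N, by omega, ?_⟩, ?_⟩
    · calc gl^[N] (gl^[k₂ - K] p) = gl^[N + (k₂ - K)] p :=
          (Function.iterate_add_apply gl N (k₂ - K) p).symm
        _ = gl^[(k₂ - K) + N] p := by rw [Nat.add_comm]
        _ = gl^[k₂ - K] (gl^[N] p) := Function.iterate_add_apply gl (k₂ - K) N p
        _ = gl^[k₂ - K] p := by rw [hpfix]
    · have h1 : |gl^[k₂ - K] p - g^[k₂ - K] p| < ε/2 := hc3 p (hZsub hpZ)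
      have h2 : |g^[k₂ - K] p - y| < ε/2 := by
        have h3 := hcont (hZsub hpZ) (show dist p zz < η₀ by
          rw [Real.dist_eq, abs_lt]
          rcases hpZ with ⟨hl, hr⟩
          rw [hZldef] at hl
          rw [hZrdef] at hr
          constructor <;> linarith)
        rw [Real.dist_eq, hgzzy] at h3
        exact h3
      calc |gl^[k₂ - K] p - y| ≤ |gl^[k₂ - K] p - g^[k₂ - K] p| + |g^[k₂ - K] p - y| :=
          abs_sub_le _ _ _
        _ < ε := by linarith


/-- no explosions for homoclinic orbits to fixed points with negative
derivative. -/
theorem no_explosion_negative_derivative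
(f : ℝ → ℝ → ℝ) (a b c d : ℝ) (hab : a < b) (hcd : c < d)
    (hmaps : ∀ lam ∈ Set.Ioo c d, Set.MapsTo (f lam) (Set.Icc a b) (Set.Icc a b))
    (hC1 : ContDiffOn ℝ 1 (fun q : ℝ × ℝ => f q.1 q.2) (Set.Ioo c d ×ˢ Set.Icc a b))
    (hC2 : ∀ lam ∈ Set.Ioo c d, ContDiffOn ℝ 2 (f lam) (Set.Icc a b))
    (lam0 : ℝ) (hlam0 : lam0 ∈ Set.Ioo c d)
    (hnc : ∀ u v : ℝ, u < v → Set.Icc u v ⊆ Set.Icc a b →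
      ∃ s ∈ Set.Icc u v, ∃ t ∈ Set.Icc u v, f lam0 s ≠ f lam0 t)
    (hH3 : AtMostOneNonHypOrbit (f lam0))
    (x0 : ℝ) (hx0I : x0 ∈ Set.Icc a b)
    (hfix : f lam0 x0 = x0) (hder : deriv (f lam0) x0 < -1)
    (z : ℕ → ℝ) (hhom : IsHomoclinicOrbit (f lam0) x0 z)
    (hcrit : ∀ k l : ℕ, deriv (f lam0) (z k) = 0 → deriv (f lam0) (z l) = 0 → z k = z l)
    (K : ℕ) (hK : 1 ≤ K) (y : ℝ) (hy : y = z K) :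
    y ∈ closure {p : ℝ | IsHyperbolicPeriodic (f lam0) p} ∧
      ¬ ChainExplosionPoint f (Set.Ioo c d) lam0 y := by
  have hper := lemA f a b c d hab hcd hmaps hC1 hC2 lam0 hlam0 hnc x0 hx0I hfix hder z hhom
    K hK y hy
  have hfixit : ∀ j : ℕ, (f lam0)^[j] x0 = x0 := by
    intro j
    induction j with
    | zero => simp
    | succ j ih => rw [Function.iterate_succ_apply', ih]; exact hfix
  have hKy : (f lam0)^[K] y = x0 := by
    obtain ⟨hz0, hzrec, -, -⟩ := hhom
    have hzi : ∀ kk jj : ℕ, (f lam0)^[jj] (z (kk + jj)) = z kk := by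
      intro kk jj
      induction jj with
      | zero => simp
      | succ jj ih =>
        rw [show kk + (jj+1) = (kk+jj) + 1 by ring, Function.iterate_succ_apply, hzrec (kk+jj)]
        exact ih
    rw [hy]
    have := hzi 0 K
    simpa [hz0] using this
  have hx0hyp : IsHyperbolicPeriodic (f lam0) x0 := by
    have hfixx : Function.IsFixedPt (f lam0) x0 := hfix
    have hmp : Function.minimalPeriod (f lam0) x0 = 1 :=
      Function.minimalPeriod_eq_one_iff_isFixedPt.mpr hfixx
    refine ⟨⟨1, le_rfl, by simpa using hfix⟩, ?_⟩
    rw [hmp]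
    simp only [Function.iterate_one]
    have h1 : 1 < |deriv (f lam0) x0| := by
      rw [abs_of_neg (by linarith)]
      linarith
    exact h1.ne'
  constructor
  · -- y is in the closure of the hyperbolic periodic points
    by_contra hclo
    rw [Metric.mem_closure_iff] at hclo
    push_neg at hclo
    obtain ⟨ε₀, hε₀, hfar⟩ := hclo
    have hpp : ∀ j : ℕ, ∃ p, IsPeriodic (f lam0) p ∧ |p - y| < min ε₀ (1/(j+1)) := by
      intro j
      obtain ⟨r, hr, h⟩ := hper (min ε₀ (1/(j+1))) (lt_min hε₀ (by positivity))
      obtain ⟨q, hq1, hq2⟩ := h lam0 hlam0 (by simpa using hr)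
      exact ⟨q, hq1, hq2⟩
    choose P hP1 hP2 using hpp
    have hnh : ∀ j, ¬ IsHyperbolicPeriodic (f lam0) (P j) := by
      intro j hh
      have h1 := hfar (P j) hh
      rw [Real.dist_eq] at h1
      have h3 : |P j - y| < ε₀ := lt_of_lt_of_le (hP2 j) (min_le_left _ _)
      rw [abs_sub_comm] at h3
      linarith
    have horb : ∀ j, Orbit (f lam0) (P j) = Orbit (f lam0) (P 0) := fun j =>
      hH3 (P j) (P 0) (hP1 j) (hnh j) (hP1 0) (hnh 0)
    have hmem : ∀ j, P j ∈ Orbit (f lam0) (P 0) := by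
      intro j
      rw [← horb j]
      exact ⟨0, rfl⟩
    obtain ⟨n0, hn0, hper0⟩ := hP1 0
    have hmul : ∀ cc : ℕ, (f lam0)^[n0 * cc] (P 0) = P 0 := by
      intro cc
      induction cc with
      | zero => simp
      | succ cc ih =>
        rw [Nat.mul_succ, Function.iterate_add_apply, hper0]
        exact ih
    have hfin : (Orbit (f lam0) (P 0)).Finite := by
      apply Set.Finite.subset (Set.finite_range (fun i : Fin n0 => (f lam0)^[(i : ℕ)] (P 0)))
      rintro x ⟨mm, rfl⟩
      refine ⟨⟨mm % n0, Nat.mod_lt _ (by omega)⟩, ?_⟩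
      show (f lam0)^[mm % n0] (P 0) = (f lam0)^[mm] (P 0)
      conv_rhs => rw [show mm = mm % n0 + n0 * (mm / n0) from (Nat.mod_add_div mm n0).symm,
        Function.iterate_add_apply, hmul]
    have htendP : Tendsto P atTop (𝓝 y) := by
      rw [tendsto_iff_dist_tendsto_zero]
      apply squeeze_zero (fun j => dist_nonneg) (fun j => ?_)
        tendsto_one_div_add_atTop_nhds_zero_nat
      rw [Real.dist_eq]
      exact le_of_lt (lt_of_lt_of_le (hP2 j) (min_le_right _ _))
    have hymem : y ∈ Orbit (f lam0) (P 0) :=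
      hfin.isClosed.mem_of_tendsto htendP (Filter.Eventually.of_forall hmem)
    obtain ⟨mm, hmm⟩ := hymem
    have hyper : (f lam0)^[n0 * K] y = y := by
      rw [← hmm]
      calc (f lam0)^[n0*K] ((f lam0)^[mm] (P 0)) = (f lam0)^[n0*K + mm] (P 0) :=
            (Function.iterate_add_apply _ _ _ _).symm
        _ = (f lam0)^[mm + n0*K] (P 0) := by rw [Nat.add_comm]
        _ = (f lam0)^[mm] ((f lam0)^[n0*K] (P 0)) := Function.iterate_add_apply _ _ _ _
        _ = (f lam0)^[mm] (P 0) := by rw [hmul K]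
    have hKle : K ≤ n0 * K := Nat.le_mul_of_pos_left K (by omega)
    have hyx0 : y = x0 := by
      have h5 : (f lam0)^[n0*K] y = (f lam0)^[n0*K - K] ((f lam0)^[K] y) := by
        rw [← Function.iterate_add_apply]
        congr 1
        omega
      rw [hKy, hfixit] at h5
      rw [← hyper, h5]
    have hcontr := hfar x0 hx0hyp
    rw [hyx0, dist_self] at hcontr
    linarith
  · -- no chain explosion
    rintro ⟨hcr, δ₀, hδ₀, hside⟩
    obtain ⟨r, hr, hA⟩ := hper δ₀ hδ₀
    obtain ⟨hc, hd⟩ := hlam0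
    rcases hside with hL | hR
    · set lam := max (lam0 - r/2) ((c + lam0)/2) with hlamdef
      have h1 : c < lam := lt_of_lt_of_le (by linarith) (le_max_right _ _)
      have h2 : lam < lam0 := max_lt (by linarith) (by linarith)
      have h3 : lam < d := lt_trans h2 hd
      have h4 : |lam - lam0| < r := by
        rw [abs_lt]
        have h5 := le_max_left (lam0 - r/2) ((c+lam0)/2)
        constructor <;> [linarith; linarith]
      obtain ⟨q, hq1, hq2⟩ := hA lam ⟨h1, h3⟩ h4
      exact hL lam ⟨h1, h3⟩ h2 q (by rw [Metric.mem_ball, Real.dist_eq]; exact hq2)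
        (periodic_chainRecurrent hq1)
    · set lam := min (lam0 + r/2) ((lam0 + d)/2) with hlamdef
      have h2 : lam0 < lam := lt_min (by linarith) (by linarith)
      have h1 : c < lam := lt_trans hc h2
      have h3 : lam < d := lt_of_le_of_lt (min_le_right _ _) (by linarith)
      have h4 : |lam - lam0| < r := by
        rw [abs_lt]
        have h5 := min_le_left (lam0 + r/2) ((lam0+d)/2)
        constructor <;> [linarith; linarith]
      obtain ⟨q, hq1, hq2⟩ := hA lam ⟨h1, h3⟩ h4
      exact hR lam ⟨h1, h3⟩ h2 q (by rw [Metric.mem_ball, Real.dist_eq]; exact hq2)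
        (periodic_chainRecurrent hq1)
end

section
/- Let g be a C² map of a compact interval I into itself that is not constant on any subinterval, let x₀ be a repelling fixed point of g with g'(x₀) < −1, and let (z_{−k}) be a homoclinic orbit to x₀ containing at most one critical point of g. Then for every point y = z_{−K} of the orbit there exist periodic points p_j of g with least periods n_j such that p_j → y and n_j → ∞ as j → ∞. -/
open Set Metric Filter Function Topology

private lemma myImage_eq_Icc {f : ℝ → ℝ} {u v : ℝ} (huv : u ≤ v)
    (hf : ContinuousOn f (Set.Icc u v)) :
    ∃ i1 i2 : ℝ, i1 ≤ i2 ∧ f '' Set.Icc u v = Set.Icc i1 i2 := by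
  have hconn : IsPreconnected (f '' Set.Icc u v) := (isPreconnected_Icc).image f hf
  have hcomp : IsCompact (f '' Set.Icc u v) := (isCompact_Icc).image_of_continuousOn hf
  have hne : (f '' Set.Icc u v).Nonempty := (Set.nonempty_Icc.2 huv).image f
  have heq := eq_Icc_of_connected_compact ⟨hne, hconn⟩ hcomp
  exact ⟨_, _, csInf_le_csSup hne hcomp.bddBelow hcomp.bddAbove, heq⟩

private lemma myFixed_of_cover {f : ℝ → ℝ} {u v : ℝ} (huv : u ≤ v)
    (hf : ContinuousOn f (Set.Icc u v)) (hcov : Set.Icc u v ⊆ f '' Set.Icc u v) :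
    ∃ p ∈ Set.Icc u v, f p = p := by
  obtain ⟨s, hs, hfs⟩ := hcov (Set.left_mem_Icc.2 huv)
  obtain ⟨t, ht, hft⟩ := hcov (Set.right_mem_Icc.2 huv)
  have hsub : Set.uIcc s t ⊆ Set.Icc u v := Set.uIcc_subset_Icc hs ht
  have hh : ContinuousOn (fun x => f x - x) (Set.uIcc s t) :=
    (hf.mono hsub).sub continuousOn_id
  have h0 : (0:ℝ) ∈ Set.uIcc (f s - s) (f t - t) := by
    apply Set.mem_uIcc.2; left
    constructor
    · rw [hfs]; linarith [hs.1]
    · rw [hft]; linarith [ht.2]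
  obtain ⟨q, hq, hq0⟩ := intermediate_value_uIcc hh h0
  exact ⟨q, hsub hq, by
    have : f q - q = 0 := hq0
    linarith⟩

set_option maxHeartbeats 2000000 in
/-- every point of a homoclinic orbit (negative eigenvalue case) is a limit of
periodic points whose least periods tend to infinity. -/
theorem periodic_points_accumulate_on_homoclinic_orbit
    (a b : ℝ) (hab : a < b) (g : ℝ → ℝ)
    (hmaps : Set.MapsTo g (Set.Icc a b) (Set.Icc a b))
    (hC2 : ContDiffOn ℝ 2 g (Set.Icc a b))
    (hnc : ∀ u v : ℝ, u < v → Set.Icc u v ⊆ Set.Icc a b →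
      ∃ s ∈ Set.Icc u v, ∃ t ∈ Set.Icc u v, g s ≠ g t)
    (x0 : ℝ) (hx0I : x0 ∈ Set.Icc a b) (hfix : g x0 = x0) (hder : deriv g x0 < -1)
    (z : ℕ → ℝ) (hhom : IsHomoclinicOrbit g x0 z)
    (hcrit : ∀ k l : ℕ, deriv g (z k) = 0 → deriv g (z l) = 0 → z k = z l) :
    ∀ K : ℕ, ∃ p : ℕ → ℝ,
      (∀ j : ℕ, IsPeriodic g (p j)) ∧
      Filter.Tendsto p Filter.atTop (nhds (z K)) ∧
      Filter.Tendsto (fun j => Function.minimalPeriod g (p j)) Filter.atTop Filter.atTop := by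
  intro K
  obtain ⟨hz0, hzg, ⟨K₀, hK₀1, hK₀⟩, hzlim⟩ := hhom
  have hgc : ContinuousOn g (Set.Icc a b) := hC2.continuousOn
  have hiterc : ∀ k : ℕ, ContinuousOn (g^[k]) (Set.Icc a b) := by
    intro k
    induction k with
    | zero => simpa using continuousOn_id
    | succ k ih =>
      rw [Function.iterate_succ]
      exact ih.comp hgc hmaps
  have hitermaps : ∀ k : ℕ, Set.MapsTo (g^[k]) (Set.Icc a b) (Set.Icc a b) :=
    fun k => hmaps.iterate k
  have hzit : ∀ j k : ℕ, g^[k] (z (j + k)) = z j := by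
    intro j k
    induction k with
    | zero => rfl
    | succ k ih =>
      have h1 : j + (k + 1) = (j + k) + 1 := by omega
      rw [h1, Function.iterate_succ_apply, hzg (j + k), ih]
  have hzKx : g^[K] (z K) = x0 := by
    have := hzit 0 K
    simpa [hz0] using this
  have hzne : ∀ k : ℕ, K₀ ≤ k → z k ≠ x0 := by
    intro k hk h
    apply hK₀
    have h2 : g^[k - K₀] (z (K₀ + (k - K₀))) = z K₀ := hzit K₀ (k - K₀)
    rw [show K₀ + (k - K₀) = k from by omega, h, Function.iterate_fixed hfix] at h2
    exact h2.symm
  -- differentiability at x0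
  have hdiff : DifferentiableAt ℝ g x0 := by
    by_contra h
    rw [deriv_zero_of_not_differentiableAt h] at hder
    linarith
  have hgd : HasDerivAt g (deriv g x0) x0 := hdiff.hasDerivAt
  have hslope0 : Filter.Tendsto (slope g x0) (nhdsWithin x0 {x0}ᶜ) (nhds (deriv g x0)) :=
    hasDerivAt_iff_tendsto_slope.1 hgd
  have hslneg : ∀ᶠ x in nhdsWithin x0 {x0}ᶜ, slope g x0 x < 0 :=
    Filter.Tendsto.eventually_lt_const (by linarith) hslope0
  -- x0 is interior
  have hax0 : a < x0 := by
    rcases lt_or_eq_of_le hx0I.1 with h | h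
    · exact h
    exfalso
    have hmem : Set.Ioc x0 b ∈ nhdsWithin x0 (Set.Ioi x0) :=
      Ioc_mem_nhdsGT_of_mem ⟨le_refl x0, by rw [← h]; exact hab⟩
    have hev2 : ∀ᶠ x in nhdsWithin x0 (Set.Ioi x0), slope g x0 x < 0 :=
      Filter.Eventually.filter_mono
        (nhdsWithin_mono x0 (fun y hy => Set.mem_compl_singleton_iff.2 (ne_of_gt hy))) hslneg
    obtain ⟨x, hx1, hx2⟩ := (hev2.and (Filter.eventually_of_mem hmem (fun y hy => hy))).exists
    have hxpos : (0:ℝ) < x - x0 := by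
      have := hx2.1; linarith
    have hgx : g x - g x0 < 0 := by
      have h2 := mul_neg_of_neg_of_pos hx1 hxpos
      rwa [slope_def_field, div_mul_cancel₀ _ (ne_of_gt hxpos)] at h2
    have hxI : x ∈ Set.Icc a b := ⟨by rw [h]; exact le_of_lt hx2.1, hx2.2⟩
    have hga := (hmaps hxI).1
    rw [hfix] at hgx
    rw [← h] at hgx
    linarith
  have hbx0 : x0 < b := by
    rcases lt_or_eq_of_le hx0I.2 with h | h
    · exact h
    exfalso
    have hmem : Set.Ico a x0 ∈ nhdsWithin x0 (Set.Iio x0) :=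
      Ico_mem_nhdsLT_of_mem ⟨hax0, le_refl x0⟩
    have hev2 : ∀ᶠ x in nhdsWithin x0 (Set.Iio x0), slope g x0 x < 0 :=
      Filter.Eventually.filter_mono
        (nhdsWithin_mono x0 (fun y hy => Set.mem_compl_singleton_iff.2 (ne_of_lt hy))) hslneg
    obtain ⟨x, hx1, hx2⟩ := (hev2.and (Filter.eventually_of_mem hmem (fun y hy => hy))).exists
    have hxneg : x - x0 < 0 := by
      have := hx2.2; linarith
    have hgx : 0 < g x - g x0 := by
      have h2 := mul_pos_of_neg_of_neg hx1 hxneg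
      rwa [slope_def_field, div_mul_cancel₀ _ (ne_of_lt hxneg)] at h2
    have hxI : x ∈ Set.Icc a b := ⟨hx2.1, by rw [← h]; exact le_of_lt hx2.2⟩
    have hgb := (hmaps hxI).2
    rw [hfix] at hgx
    rw [h] at hgx
    linarith
  have hx0O : x0 ∈ Set.Ioo a b := ⟨hax0, hbx0⟩
  -- expansion neighborhood
  have hC2O : ContDiffOn ℝ 2 g (Set.Ioo a b) := hC2.mono Set.Ioo_subset_Icc_self
  have hdc : ContinuousOn (deriv g) (Set.Ioo a b) :=
    hC2O.continuousOn_deriv_of_isOpen isOpen_Ioo (by norm_num)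
  have hdiffO : ∀ x ∈ Set.Ioo a b, DifferentiableAt ℝ g x := by
    intro x hx
    exact (hC2O.differentiableOn (by norm_num)).differentiableAt (isOpen_Ioo.mem_nhds hx)
  set lam : ℝ := (1 - deriv g x0) / 2 with hlamdef
  have hlam1 : 1 < lam := by rw [hlamdef]; linarith
  have hdlam : deriv g x0 < -lam := by rw [hlamdef]; linarith
  have hdcx : ContinuousAt (deriv g) x0 := hdc.continuousAt (isOpen_Ioo.mem_nhds hx0O)
  have hUev : ∀ᶠ x in nhds x0, deriv g x < -lam :=
    Filter.Tendsto.eventually_lt_const hdlam hdcx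
  have hUO : {x : ℝ | deriv g x < -lam} ∩ Set.Ioo a b ∈ nhds x0 :=
    Filter.inter_mem hUev (isOpen_Ioo.mem_nhds hx0O)
  obtain ⟨δ, hδpos, hδsub⟩ := (Metric.nhds_basis_closedBall.mem_iff).1 hUO
  have hδIoo : Set.Icc (x0 - δ) (x0 + δ) ⊆ Set.Ioo a b := by
    intro x hx
    exact (hδsub (by rwa [Real.closedBall_eq_Icc])).2
  have hδder : ∀ x ∈ Set.Icc (x0 - δ) (x0 + δ), deriv g x < -lam := by
    intro x hx
    exact (hδsub (by rwa [Real.closedBall_eq_Icc])).1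
  have hδIcc : Set.Icc (x0 - δ) (x0 + δ) ⊆ Set.Icc a b := hδIoo.trans Set.Ioo_subset_Icc_self
  -- one-step expansion estimates
  have hstepR : ∀ c : ℝ, 0 < c → c ≤ δ → g (x0 + c) ≤ x0 - lam * c := by
    intro c hc hcδ
    have hsub : Set.Icc x0 (x0 + c) ⊆ Set.Icc (x0 - δ) (x0 + δ) :=
      Set.Icc_subset_Icc (by linarith) (by linarith)
    obtain ⟨ξ, hξ, hξeq⟩ := exists_hasDerivAt_eq_slope g (deriv g) (by linarith : x0 < x0 + c)
      (hgc.mono (hsub.trans hδIcc))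
      (fun x hx => (hdiffO x (hδIoo (hsub (Set.Ioo_subset_Icc_self hx)))).hasDerivAt)
    have hlt := hδder ξ (hsub (Set.Ioo_subset_Icc_self hξ))
    rw [hξeq, hfix] at hlt
    have hrw : x0 + c - x0 = c := by ring
    rw [hrw] at hlt
    have h2 := (div_lt_iff₀ hc).1 hlt
    linarith
  have hstepL : ∀ c : ℝ, 0 < c → c ≤ δ → x0 + lam * c ≤ g (x0 - c) := by
    intro c hc hcδ
    have hsub : Set.Icc (x0 - c) x0 ⊆ Set.Icc (x0 - δ) (x0 + δ) :=
      Set.Icc_subset_Icc (by linarith) (by linarith)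
    obtain ⟨ξ, hξ, hξeq⟩ := exists_hasDerivAt_eq_slope g (deriv g) (by linarith : x0 - c < x0)
      (hgc.mono (hsub.trans hδIcc))
      (fun x hx => (hdiffO x (hδIoo (hsub (Set.Ioo_subset_Icc_self hx)))).hasDerivAt)
    have hlt := hδder ξ (hsub (Set.Ioo_subset_Icc_self hξ))
    rw [hξeq, hfix] at hlt
    have hrw : x0 - (x0 - c) = c := by ring
    rw [hrw] at hlt
    have h2 := (div_lt_iff₀ hc).1 hlt
    linarith
  -- one-step covering
  have hcovR : ∀ c : ℝ, 0 < c → c ≤ δ →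
      Set.Icc (x0 - min (lam * c) δ) x0 ⊆ g '' Set.Icc x0 (x0 + c) := by
    intro c hc hcδ
    have hcont : ContinuousOn g (Set.Icc x0 (x0 + c)) :=
      hgc.mono ((Set.Icc_subset_Icc (by linarith) (by linarith)).trans hδIcc)
    have h1 := intermediate_value_Icc' (by linarith : x0 ≤ x0 + c) hcont
    intro y hy
    apply h1
    refine ⟨?_, ?_⟩
    · have h2 := hstepR c hc hcδ
      have hmin : min (lam * c) δ ≤ lam * c := min_le_left _ _
      have := hy.1
      linarith
    · rw [hfix]; exact hy.2
  have hcovL : ∀ c : ℝ, 0 < c → c ≤ δ →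
      Set.Icc x0 (x0 + min (lam * c) δ) ⊆ g '' Set.Icc (x0 - c) x0 := by
    intro c hc hcδ
    have hcont : ContinuousOn g (Set.Icc (x0 - c) x0) :=
      hgc.mono ((Set.Icc_subset_Icc (by linarith) (by linarith)).trans hδIcc)
    have h1 := intermediate_value_Icc' (by linarith : x0 - c ≤ x0) hcont
    intro y hy
    apply h1
    refine ⟨?_, ?_⟩
    · rw [hfix]; exact hy.1
    · have h2 := hstepL c hc hcδ
      have hmin : min (lam * c) δ ≤ lam * c := min_le_left _ _
      have := hy.2
      linarith
  -- growth of one-sided intervals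
  have hgrow : ∀ (S : Set ℝ) (c : ℝ), 0 < c → c ≤ δ →
      (S = Set.Icc x0 (x0 + c) ∨ S = Set.Icc (x0 - c) x0) →
      ∀ n : ℕ, ∃ c' : ℝ, 0 < c' ∧ c' ≤ δ ∧ min (lam ^ n * c) δ ≤ c' ∧
        (Set.Icc x0 (x0 + c') ⊆ g^[n] '' S ∨ Set.Icc (x0 - c') x0 ⊆ g^[n] '' S) := by
    intro S c hc hcδ hS n
    induction n with
    | zero =>
      refine ⟨c, hc, hcδ, by simp, ?_⟩
      rcases hS with h | h
      · left; rw [h]; simp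
      · right; rw [h]; simp
    | succ n ih =>
      obtain ⟨c', hc1, hc2, hc3, hc4⟩ := ih
      have hlampos : (0:ℝ) < lam := by linarith
      have hminpos : 0 < min (lam * c') δ := lt_min (mul_pos hlampos hc1) hδpos
      refine ⟨min (lam * c') δ, hminpos, min_le_right _ _, ?_, ?_⟩
      · rcases le_total (lam ^ n * c) δ with h | h
        · have h5 : lam ^ n * c ≤ c' := by rw [min_eq_left h] at hc3; exact hc3
          have h6 : lam ^ (n + 1) * c ≤ lam * c' := by
            rw [pow_succ]
            nlinarith
          exact min_le_min h6 le_rfl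
        · have h5 : δ ≤ c' := by rw [min_eq_right h] at hc3; exact hc3
          have h6 : δ ≤ lam * c' := by nlinarith
          rw [min_eq_right h6]
          exact min_le_right _ _
      · have himg : g^[n + 1] '' S = g '' (g^[n] '' S) := by
          rw [Function.iterate_succ', Set.image_comp]
        rcases hc4 with h | h
        · right
          rw [himg]
          exact (hcovR c' hc1 hc2).trans (Set.image_mono h)
        · left
          rw [himg]
          exact (hcovL c' hc1 hc2).trans (Set.image_mono h)
  -- full sides map onto each other, and any side can be reached at any late time
  have hδδ : min (lam * δ) δ = δ := min_eq_right (by nlinarith)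
  have hfullR : Set.Icc x0 (x0 + δ) ⊆ g '' Set.Icc (x0 - δ) x0 := by
    have := hcovL δ hδpos le_rfl; rwa [hδδ] at this
  have hfullL : Set.Icc (x0 - δ) x0 ⊆ g '' Set.Icc x0 (x0 + δ) := by
    have := hcovR δ hδpos le_rfl; rwa [hδδ] at this
  have hreach : ∀ (S : Set ℝ) (c : ℝ), 0 < c → c ≤ δ →
      (S = Set.Icc x0 (x0 + c) ∨ S = Set.Icc (x0 - c) x0) →
      ∀ (N : ℕ) (T : Set ℝ), (T = Set.Icc x0 (x0 + δ) ∨ T = Set.Icc (x0 - δ) x0) →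
      ∃ n : ℕ, N ≤ n ∧ T ⊆ g^[n] '' S := by
    intro S c hc hcδ hS N T hT
    obtain ⟨n1, hn1⟩ := pow_unbounded_of_one_lt (δ / c) hlam1
    have hpow : δ ≤ lam ^ (max N n1) * c := by
      have h1 : lam ^ n1 ≤ lam ^ (max N n1) :=
        pow_le_pow_right₀ (le_of_lt hlam1) (le_max_right _ _)
      have h2 : δ / c < lam ^ (max N n1) := lt_of_lt_of_le hn1 h1
      have := (div_lt_iff₀ hc).1 h2
      linarith
    obtain ⟨c', hc1, hc2, hc3, hc4⟩ := hgrow S c hc hcδ hS (max N n1)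
    rw [min_eq_right hpow] at hc3
    have hc'δ : c' = δ := le_antisymm hc2 hc3
    subst hc'δ
    have himg : ∀ m : ℕ, g^[m + 1] '' S = g '' (g^[m] '' S) := by
      intro m; rw [Function.iterate_succ', Set.image_comp]
    rcases hc4 with h | h <;> rcases hT with hT | hT
    · exact ⟨max N n1, le_max_left _ _, by rw [hT]; exact h⟩
    · refine ⟨max N n1 + 1, le_trans (le_max_left _ _) (Nat.le_succ _), ?_⟩
      rw [hT, himg]
      exact hfullL.trans (Set.image_mono h)
    · refine ⟨max N n1 + 1, le_trans (le_max_left _ _) (Nat.le_succ _), ?_⟩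
      rw [hT, himg]
      exact hfullR.trans (Set.image_mono h)
    · exact ⟨max N n1, le_max_left _ _, by rw [hT]; exact h⟩
  -- iterates are nonconstant on nondegenerate intervals
  have hNC : ∀ (m : ℕ) (u v : ℝ), u < v → Set.Icc u v ⊆ Set.Icc a b →
      ∃ s ∈ Set.Icc u v, ∃ t ∈ Set.Icc u v, g^[m] s ≠ g^[m] t := by
    intro m
    induction m with
    | zero =>
      intro u v huv hsub
      exact ⟨u, Set.left_mem_Icc.2 huv.le, v, Set.right_mem_Icc.2 huv.le,
        by simpa using ne_of_lt huv⟩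
    | succ m ih =>
      intro u v huv hsub
      obtain ⟨i1, i2, hi, himg⟩ := myImage_eq_Icc huv.le (hgc.mono hsub)
      have hsub2 : Set.Icc i1 i2 ⊆ Set.Icc a b := by
        rw [← himg]; exact (hmaps.mono_left hsub).image_subset
      have hne : i1 < i2 := by
        rcases lt_or_eq_of_le hi with h | h
        · exact h
        exfalso
        obtain ⟨s, hs, t, ht, hst⟩ := hnc u v huv hsub
        have h1 : g s ∈ Set.Icc i1 i2 := by rw [← himg]; exact Set.mem_image_of_mem g hs
        have h2 : g t ∈ Set.Icc i1 i2 := by rw [← himg]; exact Set.mem_image_of_mem g ht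
        rw [← h] at h1 h2
        exact hst (by rw [le_antisymm h1.2 h1.1, le_antisymm h2.2 h2.1])
      obtain ⟨s', hs', t', ht', hst'⟩ := ih i1 i2 hne hsub2
      rw [← himg] at hs' ht'
      obtain ⟨s, hs, rfl⟩ := hs'
      obtain ⟨t, ht, rfl⟩ := ht'
      exact ⟨s, hs, t, ht, by simpa [Function.iterate_succ_apply] using hst'⟩
  -- main covering reduction
  have hreduce : ∀ (j1 j2 : ℝ), j1 < j2 → Set.Icc j1 j2 ⊆ Set.Icc a b →
      x0 ∉ Set.Icc j1 j2 →
      ∀ (k1 : ℕ), x0 ∈ g^[k1] '' Set.Icc j1 j2 →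
      ∀ (w1 w2 : ℝ), w1 < w2 →
      (Set.Icc w1 w2 ⊆ Set.Icc x0 (x0 + δ) ∨ Set.Icc w1 w2 ⊆ Set.Icc (x0 - δ) x0) →
      ∀ (k2 : ℕ), Set.Icc j1 j2 ⊆ g^[k2] '' Set.Icc w1 w2 →
      ∃ p ∈ Set.Icc j1 j2, ∃ n : ℕ, 1 ≤ n ∧ g^[n] p = p := by
    intro j1 j2 hj hJsub hJx0 k1 hk1 w1 w2 hw hWside k2 hk2
    obtain ⟨c1, c2, hc, hC⟩ := myImage_eq_Icc hj.le ((hiterc k1).mono hJsub)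
    have hx0C : x0 ∈ Set.Icc c1 c2 := by rw [← hC]; exact hk1
    have hcc : c1 < c2 := by
      rcases lt_or_eq_of_le hc with h | h
      · exact h
      exfalso
      obtain ⟨s, hs, t, ht, hst⟩ := hNC k1 j1 j2 hj hJsub
      have h1 : g^[k1] s ∈ Set.Icc c1 c2 := by rw [← hC]; exact Set.mem_image_of_mem _ hs
      have h2 : g^[k1] t ∈ Set.Icc c1 c2 := by rw [← hC]; exact Set.mem_image_of_mem _ ht
      rw [← h] at h1 h2
      exact hst (by rw [le_antisymm h1.2 h1.1, le_antisymm h2.2 h2.1])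
    have hS : ∃ (S : Set ℝ) (c : ℝ), 0 < c ∧ c ≤ δ ∧
        (S = Set.Icc x0 (x0 + c) ∨ S = Set.Icc (x0 - c) x0) ∧ S ⊆ Set.Icc c1 c2 := by
      rcases lt_or_ge x0 c2 with h | h
      · refine ⟨Set.Icc x0 (x0 + min (c2 - x0) δ), min (c2 - x0) δ,
          lt_min (by linarith) hδpos, min_le_right _ _, Or.inl rfl, ?_⟩
        apply Set.Icc_subset_Icc hx0C.1
        have : min (c2 - x0) δ ≤ c2 - x0 := min_le_left _ _
        linarith
      · have hx2 : x0 = c2 := le_antisymm hx0C.2 h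
        refine ⟨Set.Icc (x0 - min (x0 - c1) δ) x0, min (x0 - c1) δ,
          lt_min (by rw [hx2]; linarith) hδpos, min_le_right _ _, Or.inr rfl, ?_⟩
        apply Set.Icc_subset_Icc _ hx0C.2
        have : min (x0 - c1) δ ≤ x0 - c1 := min_le_left _ _
        linarith
    obtain ⟨S, c, hcpos, hcδ, hSside, hSsub⟩ := hS
    obtain ⟨n, hn1, hnT⟩ : ∃ n : ℕ, 1 ≤ n ∧ Set.Icc w1 w2 ⊆ g^[n] '' S := by
      rcases hWside with h | h
      · obtain ⟨n, hn, hsub⟩ := hreach S c hcpos hcδ hSside 1 (Set.Icc x0 (x0 + δ)) (Or.inl rfl)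
        exact ⟨n, hn, h.trans hsub⟩
      · obtain ⟨n, hn, hsub⟩ := hreach S c hcpos hcδ hSside 1 (Set.Icc (x0 - δ) x0) (Or.inr rfl)
        exact ⟨n, hn, h.trans hsub⟩
    have hchain : Set.Icc j1 j2 ⊆ g^[k1 + n + k2] '' Set.Icc j1 j2 := by
      have e1 : g^[k1 + n + k2] '' Set.Icc j1 j2
          = g^[k2] '' (g^[n] '' (g^[k1] '' Set.Icc j1 j2)) := by
        rw [show k1 + n + k2 = k2 + (n + k1) from by omega]
        rw [Function.iterate_add g k2 (n + k1), Set.image_comp]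
        rw [Function.iterate_add g n k1, Set.image_comp]
      rw [e1]
      calc Set.Icc j1 j2 ⊆ g^[k2] '' Set.Icc w1 w2 := hk2
        _ ⊆ g^[k2] '' (g^[n] '' S) := Set.image_mono hnT
        _ ⊆ g^[k2] '' (g^[n] '' (Set.Icc c1 c2)) :=
            Set.image_mono (Set.image_mono hSsub)
        _ = g^[k2] '' (g^[n] '' (g^[k1] '' Set.Icc j1 j2)) := by rw [hC]
    obtain ⟨p, hp, hpfix⟩ := myFixed_of_cover hj.le ((hiterc (k1 + n + k2)).mono hJsub) hchain
    exact ⟨p, hp, k1 + n + k2, by omega, hpfix⟩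
  -- construction of small one-sided windows along the backward orbit
  have hW : ∀ ρ : ℝ, 0 < ρ → ∃ (w1 w2 : ℝ) (k : ℕ),
      w1 < w2 ∧ z (K + k) ∈ Set.Icc w1 w2 ∧
      (Set.Icc w1 w2 ⊆ Set.Icc x0 (x0 + δ) ∨ Set.Icc w1 w2 ⊆ Set.Icc (x0 - δ) x0) ∧
      x0 ∉ Set.Icc w1 w2 ∧ (∀ x ∈ Set.Icc w1 w2, |x - x0| < ρ) ∧
      (∀ x ∈ Set.Icc w1 w2, ∀ y ∈ Set.Icc w1 w2, |g^[k] x - g^[k] y| < ρ) := by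
    intro ρ hρ
    obtain ⟨N, hN⟩ := Metric.tendsto_atTop.1 hzlim (min δ ρ / 2)
      (by positivity)
    have hz1 : dist (z (K + (N + K₀))) x0 < min δ ρ / 2 := hN (K + (N + K₀)) (by omega)
    have hz2 : z (K + (N + K₀)) ≠ x0 := hzne (K + (N + K₀)) (by omega)
    set k := N + K₀ with hkdef
    set z' := z (K + k) with hz'def
    obtain ⟨η, hη, hucη⟩ := Metric.uniformContinuousOn_iff.1
      (isCompact_Icc.uniformContinuousOn_of_continuous (hiterc k)) ρ hρ
    set r := min (|x0 - z'| / 2) (min (δ / 2) (min (η / 4) (ρ / 2))) with hrdef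
    have habs : 0 < |x0 - z'| := abs_pos.2 (sub_ne_zero.2 (Ne.symm hz2))
    have hrpos : 0 < r := by
      apply lt_min (by positivity)
      apply lt_min (by positivity)
      exact lt_min (by positivity) (by positivity)
    have hr1 : r ≤ |x0 - z'| / 2 := min_le_left _ _
    have hr2 : r ≤ δ / 2 := (min_le_right _ _).trans (min_le_left _ _)
    have hr3 : r ≤ η / 4 := (min_le_right _ _).trans ((min_le_right _ _).trans (min_le_left _ _))
    have hr4 : r ≤ ρ / 2 := (min_le_right _ _).trans ((min_le_right _ _).trans (min_le_right _ _))
    have hz'δ : |z' - x0| < min δ ρ / 2 := by rw [← Real.dist_eq]; exact hz1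
    have hminδ : min δ ρ / 2 ≤ δ / 2 := by
      have := min_le_left δ ρ; linarith
    have hminρ : min δ ρ / 2 ≤ ρ / 2 := by
      have := min_le_right δ ρ; linarith
    have hside : Set.Icc (z' - r) (z' + r) ⊆ Set.Icc x0 (x0 + δ) ∨
        Set.Icc (z' - r) (z' + r) ⊆ Set.Icc (x0 - δ) x0 := by
      rcases hz2.lt_or_gt with h | h
      · right
        apply Set.Icc_subset_Icc
        · have h1 : |z' - x0| < δ / 2 := lt_of_lt_of_le hz'δ hminδ
          have h2 : x0 - z' ≤ |z' - x0| := by rw [abs_sub_comm]; exact le_abs_self _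
          linarith
        · have h1 : |x0 - z'| = x0 - z' := abs_of_pos (by linarith)
          rw [h1] at hr1
          linarith
      · left
        apply Set.Icc_subset_Icc
        · have h1 : |x0 - z'| = z' - x0 := by rw [abs_sub_comm]; exact abs_of_pos (by linarith)
          rw [h1] at hr1
          linarith
        · have h1 : |z' - x0| < δ / 2 := lt_of_lt_of_le hz'δ hminδ
          have h2 : z' - x0 ≤ |z' - x0| := le_abs_self _
          linarith
    have hx0W : x0 ∉ Set.Icc (z' - r) (z' + r) := by
      intro hx
      rcases hz2.lt_or_gt with h | h
      · have h1 : |x0 - z'| = x0 - z' := abs_of_pos (by linarith)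
        rw [h1] at hr1
        have := hx.2
        linarith
      · have h1 : |x0 - z'| = z' - x0 := by rw [abs_sub_comm]; exact abs_of_pos (by linarith)
        rw [h1] at hr1
        have := hx.1
        linarith
    have hWIcc : Set.Icc (z' - r) (z' + r) ⊆ Set.Icc a b := by
      rcases hside with h | h
      · exact h.trans ((Set.Icc_subset_Icc (by linarith) le_rfl).trans hδIcc)
      · exact h.trans ((Set.Icc_subset_Icc le_rfl (by linarith)).trans hδIcc)
    refine ⟨z' - r, z' + r, k, by linarith, by constructor <;> linarith, hside, hx0W, ?_, ?_⟩
    · intro x hx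
      have h1 : |x - z'| ≤ r := by
        rw [abs_le]; constructor
        · have := hx.1; linarith
        · have := hx.2; linarith
      have h2 : |z' - x0| < ρ / 2 := lt_of_lt_of_le hz'δ hminρ
      calc |x - x0| = |(x - z') + (z' - x0)| := by ring_nf
        _ ≤ |x - z'| + |z' - x0| := abs_add_le _ _
        _ < ρ := by linarith
    · intro x hx y hy
      have h1 : dist x y < η := by
        have hx1 := hx.1; have hx2 := hx.2
        have hy1 := hy.1; have hy2 := hy.2
        rw [Real.dist_eq, abs_lt]
        constructor <;> linarith
      have := hucη x (hWIcc hx) y (hWIcc hy) h1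
      rwa [Real.dist_eq] at this
  -- existence of periodic points in every neighborhood of z K
  have hmain : ∀ ε : ℝ, 0 < ε → ∃ p : ℝ, dist p (z K) < ε ∧ p ∈ Set.Icc a b ∧
      p ≠ x0 ∧ ∃ n : ℕ, 1 ≤ n ∧ g^[n] p = p := by
    intro ε hε
    by_cases hzK : z K = x0
    · obtain ⟨w1, w2, k, hw, hzw, hside, hx0W, hball, huc⟩ := hW ε hε
      have hWsub : Set.Icc w1 w2 ⊆ Set.Icc a b := by
        rcases hside with h | h
        · exact h.trans ((Set.Icc_subset_Icc (by linarith) le_rfl).trans hδIcc)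
        · exact h.trans ((Set.Icc_subset_Icc le_rfl (by linarith)).trans hδIcc)
      have hk1 : x0 ∈ g^[k] '' Set.Icc w1 w2 := by
        refine ⟨z (K + k), hzw, ?_⟩
        rw [hzit K k]
        exact hzK
      have hk2 : Set.Icc w1 w2 ⊆ g^[0] '' Set.Icc w1 w2 := by simp
      obtain ⟨p, hp, n, hn, hfixp⟩ := hreduce w1 w2 hw hWsub hx0W k hk1 w1 w2 hw hside 0 hk2
      refine ⟨p, ?_, hWsub hp, fun h => hx0W (h ▸ hp), n, hn, hfixp⟩
      rw [Real.dist_eq, hzK]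
      exact hball p hp
    · have hρ : 0 < min ε (|z K - x0|) := lt_min hε (abs_pos.2 (sub_ne_zero.2 hzK))
      obtain ⟨w1, w2, k, hw, hzw, hside, hx0W, hball, huc⟩ := hW (min ε (|z K - x0|)) hρ
      have hWsub : Set.Icc w1 w2 ⊆ Set.Icc a b := by
        rcases hside with h | h
        · exact h.trans ((Set.Icc_subset_Icc (by linarith) le_rfl).trans hδIcc)
        · exact h.trans ((Set.Icc_subset_Icc le_rfl (by linarith)).trans hδIcc)
      obtain ⟨j1, j2, hj, hJ⟩ := myImage_eq_Icc hw.le ((hiterc k).mono hWsub)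
      have hzKJ : z K ∈ Set.Icc j1 j2 := by
        rw [← hJ]; exact ⟨z (K + k), hzw, hzit K k⟩
      have hJlt : ∀ y ∈ Set.Icc j1 j2, |y - z K| < min ε (|z K - x0|) := by
        intro y hy
        rw [← hJ] at hy
        obtain ⟨x, hx, rfl⟩ := hy
        have h1 := huc x hx (z (K + k)) hzw
        rwa [hzit K k] at h1
      have hjj : j1 < j2 := by
        rcases lt_or_eq_of_le hj with h | h
        · exact h
        exfalso
        obtain ⟨s, hs, t, ht, hst⟩ := hNC k w1 w2 hw hWsub
        have h1 : g^[k] s ∈ Set.Icc j1 j2 := by rw [← hJ]; exact Set.mem_image_of_mem _ hs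
        have h2 : g^[k] t ∈ Set.Icc j1 j2 := by rw [← hJ]; exact Set.mem_image_of_mem _ ht
        rw [← h] at h1 h2
        exact hst (by rw [le_antisymm h1.2 h1.1, le_antisymm h2.2 h2.1])
      have hJsub : Set.Icc j1 j2 ⊆ Set.Icc a b := by
        rw [← hJ]; exact ((hitermaps k).mono_left hWsub).image_subset
      have hJx0 : x0 ∉ Set.Icc j1 j2 := by
        intro h
        have h1 := hJlt x0 h
        have h2 : min ε (|z K - x0|) ≤ |z K - x0| := min_le_right _ _
        rw [abs_sub_comm] at h1
        linarith
      have hk1 : x0 ∈ g^[K] '' Set.Icc j1 j2 := ⟨z K, hzKJ, hzKx⟩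
      have hk2 : Set.Icc j1 j2 ⊆ g^[k] '' Set.Icc w1 w2 := by rw [← hJ]
      obtain ⟨p, hp, n, hn, hfixp⟩ := hreduce j1 j2 hjj hJsub hJx0 K hk1 w1 w2 hw hside k hk2
      refine ⟨p, ?_, hJsub hp, fun h => hJx0 (h ▸ hp), n, hn, hfixp⟩
      rw [Real.dist_eq]
      exact lt_of_lt_of_le (hJlt p hp) (min_le_left _ _)
  -- assemble the sequence
  have hseq : ∀ j : ℕ, ∃ p : ℝ, dist p (z K) < 1 / ((j : ℝ) + 1) ∧ p ∈ Set.Icc a b ∧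
      p ≠ x0 ∧ ∃ n : ℕ, 1 ≤ n ∧ g^[n] p = p :=
    fun j => hmain (1 / ((j : ℝ) + 1)) (by positivity)
  choose p hp1 hp2 hp3 hp4 using hseq
  have htendsK : Filter.Tendsto p Filter.atTop (nhds (z K)) := by
    rw [Metric.tendsto_atTop]
    intro ε hε
    obtain ⟨N, hN⟩ := exists_nat_one_div_lt hε
    refine ⟨N, fun j hj => ?_⟩
    have h1 : 1 / ((j : ℝ) + 1) ≤ 1 / ((N : ℝ) + 1) := by
      apply one_div_le_one_div_of_le (by positivity)
      exact add_le_add_left (Nat.cast_le.2 hj) 1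
    exact lt_of_lt_of_le (hp1 j) (le_trans h1 (le_of_lt hN))
  refine ⟨p, fun j => hp4 j, htendsK, ?_⟩
  by_contra hcon
  rw [Filter.tendsto_atTop] at hcon
  push_neg at hcon
  obtain ⟨M, hM⟩ := hcon
  have hex : ∃ m : ℕ, m < M ∧ ∃ᶠ j in Filter.atTop, Function.minimalPeriod g (p j) = m := by
    by_contra hcon2
    have hcon3 : ∀ m : ℕ, m < M →
        ∀ᶠ j in Filter.atTop, ¬ Function.minimalPeriod g (p j) = m := by
      intro m hm
      rw [← Filter.not_frequently]
      exact fun h => hcon2 ⟨m, hm, h⟩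
    have hev : ∀ᶠ j in Filter.atTop, ∀ m ∈ Finset.range M,
        ¬ Function.minimalPeriod g (p j) = m :=
      (Filter.eventually_all_finset _).2 (fun m hm => hcon3 m (Finset.mem_range.1 hm))
    obtain ⟨j, hj1, hj2⟩ := (hM.and_eventually hev).exists
    exact hj2 _ (Finset.mem_range.2 hj1) rfl
  obtain ⟨m, hmM, hfreq⟩ := hex
  obtain ⟨φ, hφ, hφm⟩ := Filter.extraction_of_frequently_atTop hfreq
  have hm1 : 1 ≤ m := by
    obtain ⟨n, hn1, hnfix⟩ := hp4 (φ 0)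
    have hpos : 0 < Function.minimalPeriod g (p (φ 0)) :=
      Function.IsPeriodicPt.minimalPeriod_pos (by omega) hnfix
    rw [hφm 0] at hpos
    omega
  have hq : ∀ i : ℕ, g^[m] (p (φ i)) = p (φ i) := by
    intro i
    have h1 := Function.iterate_minimalPeriod (f := g) (x := p (φ i))
    rwa [hφm i] at h1
  have hqlim : Filter.Tendsto (fun i => p (φ i)) Filter.atTop (nhds (z K)) :=
    htendsK.comp hφ.tendsto_atTop
  by_cases hzK : z K = x0
  · -- derivative contradiction near x0
    have hDm : ∀ mm : ℕ, HasDerivAt (g^[mm]) ((deriv g x0) ^ mm) x0 := by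
      intro mm
      induction mm with
      | zero => simpa using hasDerivAt_id x0
      | succ mm ih =>
        have h2 : HasDerivAt g (deriv g x0) (g^[mm] x0) := by
          rw [Function.iterate_fixed hfix]
          exact hgd
        have h3 := HasDerivAt.comp x0 h2 ih
        have h4 : g ∘ g^[mm] = g^[mm + 1] := (Function.iterate_succ' g mm).symm
        rw [h4] at h3
        have h5 : deriv g x0 * (deriv g x0) ^ mm = (deriv g x0) ^ (mm + 1) := by
          rw [pow_succ]; ring
        rwa [h5] at h3
    have hslope := hasDerivAt_iff_tendsto_slope.1 (hDm m)
    have hqx : Filter.Tendsto (fun i => p (φ i)) Filter.atTop (nhdsWithin x0 {x0}ᶜ) := by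
      rw [tendsto_nhdsWithin_iff]
      constructor
      · rwa [hzK] at hqlim
      · exact Filter.Eventually.of_forall
          (fun i => Set.mem_compl_singleton_iff.2 (hp3 (φ i)))
    have h1 : Filter.Tendsto (fun i => slope (g^[m]) x0 (p (φ i))) Filter.atTop
        (nhds ((deriv g x0) ^ m)) := hslope.comp hqx
    have h2 : ∀ i : ℕ, slope (g^[m]) x0 (p (φ i)) = 1 := by
      intro i
      rw [slope_def_field, hq i, Function.iterate_fixed hfix]
      exact div_self (sub_ne_zero.2 (hp3 (φ i)))
    have h3 : (deriv g x0) ^ m = 1 := by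
      have h4 : Filter.Tendsto (fun i => slope (g^[m]) x0 (p (φ i))) Filter.atTop (nhds 1) := by
        simp only [h2]
        exact tendsto_const_nhds
      exact tendsto_nhds_unique h1 h4
    have h5 : 1 < |(deriv g x0) ^ m| := by
      rw [abs_pow]
      have h6 : 1 < |deriv g x0| := by
        rw [abs_of_neg (by linarith : deriv g x0 < 0)]
        linarith
      calc (1:ℝ) < |deriv g x0| := h6
        _ ≤ |deriv g x0| ^ m := le_self_pow₀ (le_of_lt h6) (by omega)
    rw [h3] at h5
    simp at h5
  · -- z K would be periodic, hence equal to x0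
    have hzKI : z K ∈ Set.Icc a b :=
      isClosed_Icc.mem_of_tendsto hqlim (Filter.Eventually.of_forall (fun i => hp2 (φ i)))
    have hcw : ContinuousWithinAt (g^[m]) (Set.Icc a b) (z K) :=
      (hiterc m).continuousWithinAt hzKI
    have h1 : Filter.Tendsto (fun i => g^[m] (p (φ i))) Filter.atTop
        (nhds (g^[m] (z K))) := by
      apply hcw.tendsto.comp
      rw [tendsto_nhdsWithin_iff]
      exact ⟨hqlim, Filter.Eventually.of_forall (fun i => hp2 (φ i))⟩
    have h2 : g^[m] (z K) = z K := by
      apply tendsto_nhds_unique h1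
      simp only [hq]
      exact hqlim
    have h3 : Function.IsPeriodicPt g m (z K) := h2
    have h4 : g^[K * m] (z K) = z K := h3.const_mul K
    have h5 : K ≤ K * m := by
      calc K = K * 1 := (Nat.mul_one K).symm
        _ ≤ K * m := Nat.mul_le_mul_left K hm1
    have h6 : g^[K * m] (z K) = g^[K * m - K] (g^[K] (z K)) := by
      rw [← Function.iterate_add_apply, Nat.sub_add_cancel h5]
    rw [hzKx, Function.iterate_fixed hfix, h4] at h6
    exact hzK h6
end

section
/- Suppose every periodic orbit of f₀ is hyperbolic, x₀ is a repelling fixed point of f₀ with f₀'(x₀) > 1, and w = z_{−L} is a homoclinic tangency point on a homoclinic orbit (z_{−k}) to x₀ containing no critical point of f₀ other than w. If w ∈ U_right ∩ U_left, then (w, λ₀) is not a chain explosion point. -/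
open Set Metric Filter Function Topology

set_option linter.unusedVariables false



private lemma iterFixed {g : ℝ → ℝ} {x0 : ℝ} (h : g x0 = x0) : ∀ k : ℕ, g^[k] x0 = x0 := by
  intro k
  induction k with
  | zero => rfl
  | succ k ih => rw [Function.iterate_succ_apply', ih, h]

private lemma contOnIter {g : ℝ → ℝ} {s : Set ℝ} (hg : ContinuousOn g s)
    (hm : Set.MapsTo g s s) : ∀ k : ℕ, ContinuousOn (g^[k]) s := by
  intro k
  induction k with
  | zero => simpa using continuousOn_id
  | succ k ih =>
    rw [Function.iterate_succ]
    exact ih.comp hg hm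

private lemma escapeLeft {g : ℝ → ℝ} {a b x0 δ q : ℝ}
    (hg : ContinuousOn g (Set.Icc a b)) (hm : Set.MapsTo g (Set.Icc a b) (Set.Icc a b))
    (hq : q ∈ Set.Icc a b) (hqlt : q < x0)
    (hlt : ∀ x : ℝ, x0 - δ ≤ x → x < x0 → g x < x) :
    ∃ j : ℕ, g^[j] q < x0 - δ := by
  by_contra hcon
  push_neg at hcon
  have hub : ∀ j : ℕ, g^[j] q < x0 := by
    intro j
    induction j with
    | zero => simpa using hqlt
    | succ j ih =>
      rw [Function.iterate_succ_apply']
      exact lt_trans (hlt _ (hcon j) ih) ih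
  have hdec : ∀ j : ℕ, g^[j+1] q ≤ g^[j] q := by
    intro j
    rw [Function.iterate_succ_apply']
    exact (hlt _ (hcon j) (hub j)).le
  have hanti : Antitone (fun j : ℕ => g^[j] q) := antitone_nat_of_succ_le hdec
  have hbdd : BddBelow (Set.range fun j : ℕ => g^[j] q) := by
    refine ⟨x0 - δ, ?_⟩
    rintro x ⟨j, rfl⟩
    exact hcon j
  have htend : Filter.Tendsto (fun j : ℕ => g^[j] q) Filter.atTop (nhds (⨅ j : ℕ, g^[j] q)) :=
    tendsto_atTop_ciInf hanti hbdd
  set l := ⨅ j : ℕ, g^[j] q with hl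
  have hmem : ∀ j : ℕ, g^[j] q ∈ Set.Icc a b := fun j => hm.iterate j hq
  have hlmem : l ∈ Set.Icc a b := by
    constructor
    · exact le_ciInf fun j => (hmem j).1
    · exact le_trans (ciInf_le hbdd 0) (hmem 0).2
  have hld : x0 - δ ≤ l := le_ciInf hcon
  have hlx : l < x0 := lt_of_le_of_lt (by simpa using ciInf_le hbdd 0) hqlt
  have h1 : Filter.Tendsto (fun j : ℕ => g (g^[j] q)) Filter.atTop (nhds (g l)) := by
    apply (hg l hlmem).tendsto.comp
    apply tendsto_nhdsWithin_of_tendsto_nhds_of_eventually_within _ htend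
    exact Filter.Eventually.of_forall hmem
  have h2 : Filter.Tendsto (fun j : ℕ => g (g^[j] q)) Filter.atTop (nhds l) := by
    have he : (fun j : ℕ => g (g^[j] q)) = fun j : ℕ => g^[j+1] q := by
      funext j
      rw [Function.iterate_succ_apply']
    rw [he]
    exact htend.comp (Filter.tendsto_add_atTop_nat 1)
  have hgl : g l = l := tendsto_nhds_unique h1 h2
  exact absurd hgl (ne_of_lt (hlt l hld hlx))

private lemma escapeRight {g : ℝ → ℝ} {a b x0 δ q : ℝ}
    (hg : ContinuousOn g (Set.Icc a b)) (hm : Set.MapsTo g (Set.Icc a b) (Set.Icc a b))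
    (hq : q ∈ Set.Icc a b) (hqgt : x0 < q)
    (hgt : ∀ x : ℝ, x0 < x → x ≤ x0 + δ → x < g x) :
    ∃ j : ℕ, x0 + δ < g^[j] q := by
  by_contra hcon
  push_neg at hcon
  have hub : ∀ j : ℕ, x0 < g^[j] q := by
    intro j
    induction j with
    | zero => simpa using hqgt
    | succ j ih =>
      rw [Function.iterate_succ_apply']
      exact lt_trans ih (hgt _ ih (hcon j))
  have hdec : ∀ j : ℕ, g^[j] q ≤ g^[j+1] q := by
    intro j
    rw [Function.iterate_succ_apply']
    exact (hgt _ (hub j) (hcon j)).le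
  have hmono : Monotone (fun j : ℕ => g^[j] q) := monotone_nat_of_le_succ hdec
  have hbdd : BddAbove (Set.range fun j : ℕ => g^[j] q) := by
    refine ⟨x0 + δ, ?_⟩
    rintro x ⟨j, rfl⟩
    exact hcon j
  have htend : Filter.Tendsto (fun j : ℕ => g^[j] q) Filter.atTop (nhds (⨆ j : ℕ, g^[j] q)) :=
    tendsto_atTop_ciSup hmono hbdd
  set l := ⨆ j : ℕ, g^[j] q with hl
  have hmem : ∀ j : ℕ, g^[j] q ∈ Set.Icc a b := fun j => hm.iterate j hq
  have hlmem : l ∈ Set.Icc a b := by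
    constructor
    · exact le_trans (hmem 0).1 (le_ciSup hbdd 0)
    · exact ciSup_le fun j => (hmem j).2
  have hld : l ≤ x0 + δ := ciSup_le hcon
  have hlx : x0 < l := lt_of_lt_of_le hqgt (by simpa using le_ciSup hbdd 0)
  have h1 : Filter.Tendsto (fun j : ℕ => g (g^[j] q)) Filter.atTop (nhds (g l)) := by
    apply (hg l hlmem).tendsto.comp
    apply tendsto_nhdsWithin_of_tendsto_nhds_of_eventually_within _ htend
    exact Filter.Eventually.of_forall hmem
  have h2 : Filter.Tendsto (fun j : ℕ => g (g^[j] q)) Filter.atTop (nhds l) := by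
    have he : (fun j : ℕ => g (g^[j] q)) = fun j : ℕ => g^[j+1] q := by
      funext j
      rw [Function.iterate_succ_apply']
    rw [he]
    exact htend.comp (Filter.tendsto_add_atTop_nat 1)
  have hgl : g l = l := tendsto_nhds_unique h1 h2
  exact absurd hgl.symm (ne_of_lt (hgt l hlx hld))



private lemma nondegImage {g : ℝ → ℝ} {a b : ℝ}
    (hg : ContinuousOn g (Set.Icc a b)) (hm : Set.MapsTo g (Set.Icc a b) (Set.Icc a b))
    (hnc : ∀ u v : ℝ, u < v → Set.Icc u v ⊆ Set.Icc a b →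
      ∃ s ∈ Set.Icc u v, ∃ t ∈ Set.Icc u v, g s ≠ g t) :
    ∀ (k : ℕ) (u v : ℝ), u < v → Set.Icc u v ⊆ Set.Icc a b →
      ∃ u' v' : ℝ, u' < v' ∧ Set.Icc u' v' ⊆ g^[k] '' Set.Icc u v ∧
        Set.Icc u' v' ⊆ Set.Icc a b := by
  intro k
  induction k with
  | zero =>
    intro u v huv hsub
    exact ⟨u, v, huv, by simp, hsub⟩
  | succ k ih =>
    intro u v huv hsub
    obtain ⟨u', v', huv', hsub1, hsub2⟩ := ih u v huv hsub
    obtain ⟨s, hs, t, ht, hst⟩ := hnc u' v' huv' hsub2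
    have huIcc : Set.uIcc s t ⊆ Set.Icc u' v' :=
      Set.OrdConnected.uIcc_subset Set.ordConnected_Icc hs ht
    have hiv : Set.uIcc (g s) (g t) ⊆ g '' Set.uIcc s t :=
      intermediate_value_uIcc (hg.mono (subset_trans huIcc hsub2))
    refine ⟨min (g s) (g t), max (g s) (g t), min_lt_max.mpr hst, ?_, ?_⟩
    · intro x hx
      have hx' : x ∈ Set.uIcc (g s) (g t) := by
        rw [Set.uIcc]
        simpa using hx
      obtain ⟨y, hy, hyx⟩ := hiv hx'
      obtain ⟨z0, hz0, hz0y⟩ := hsub1 (huIcc hy)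
      exact ⟨z0, hz0, by rw [Function.iterate_succ_apply', hz0y, hyx]⟩
    · have hgs := hm (hsub2 hs)
      have hgt := hm (hsub2 ht)
      intro x hx
      exact ⟨le_trans (le_min hgs.1 hgt.1) hx.1, le_trans hx.2 (max_le hgs.2 hgt.2)⟩

private lemma coverAux {g : ℝ → ℝ} {a b x0 δ w α β : ℝ}
    (hg : ContinuousOn g (Set.Icc a b)) (hm : Set.MapsTo g (Set.Icc a b) (Set.Icc a b))
    (hnc : ∀ u v : ℝ, u < v → Set.Icc u v ⊆ Set.Icc a b →
      ∃ s ∈ Set.Icc u v, ∃ t ∈ Set.Icc u v, g s ≠ g t)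
    (hx0I : x0 ∈ Set.Icc a b) (hfix : g x0 = x0)
    (hlt : ∀ x : ℝ, x0 - δ ≤ x → x < x0 → g x < x)
    (hgt : ∀ x : ℝ, x0 < x → x ≤ x0 + δ → x < g x)
    {L : ℕ} (hLw : g^[L] w = x0)
    (hu1 : ∃ n : ℕ, ∃ u ∈ Set.Icc x0 (x0 + δ), g^[n] u = w)
    (hu2 : ∃ n : ℕ, ∃ u ∈ Set.Icc (x0 - δ) x0, g^[n] u = w)
    (hαβ : α < β) (hsub : Set.Icc α β ⊆ Set.Icc a b) (hwHB : w ∈ Set.Icc α β) :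
    ∃ N : ℕ, ∃ t : ℝ, L ≤ N ∧ t ∈ Set.Icc α β ∧ g^[N] t = w := by
  classical
  obtain ⟨u', v', huv', hsubIL, hsubab⟩ := nondegImage hg hm hnc L α β hαβ hsub
  have hcL : ContinuousOn (g^[L]) (Set.Icc α β) := (contOnIter hg hm L).mono hsub
  have hILeq := hcL.image_Icc hαβ.le
  have hx0mem : x0 ∈ g^[L] '' Set.Icc α β := ⟨w, hwHB, hLw⟩
  have hq : ∃ q, q ∈ g^[L] '' Set.Icc α β ∧ q ≠ x0 := by
    by_cases h : u' = x0
    · exact ⟨v', hsubIL ⟨huv'.le, le_rfl⟩, h ▸ huv'.ne'⟩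
    · exact ⟨u', hsubIL ⟨le_rfl, huv'.le⟩, h⟩
  obtain ⟨q, hqmem, hqne⟩ := hq
  have hqI : q ∈ Set.Icc a b := by
    obtain ⟨y, hy, hyq⟩ := hqmem
    rw [← hyq]
    exact hm.iterate L (hsub hy)
  have hseg : ∀ x : ℝ, min q x0 ≤ x → x ≤ max q x0 → x ∈ g^[L] '' Set.Icc α β := by
    intro x h1 h2
    rw [hILeq] at hqmem hx0mem ⊢
    exact ⟨le_trans (le_min hqmem.1 hx0mem.1) h1, le_trans h2 (max_le hqmem.2 hx0mem.2)⟩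
  rcases lt_or_gt_of_ne hqne with hql | hqg
  · -- q < x0 : pump through the left zone, use the left branch witness
    obtain ⟨n2, u2, hu2m, hu2w⟩ := hu2
    obtain ⟨j0, hj0⟩ := escapeLeft hg hm hqI hql hlt
    have hex : ∃ j : ℕ, g^[j] q < x0 - δ := ⟨j0, hj0⟩
    set j' := Nat.find hex with hj'def
    have hj' : g^[j'] q < x0 - δ := Nat.find_spec hex
    have hmin : ∀ i : ℕ, i < j' → x0 - δ ≤ g^[i] q := fun i hi =>
      le_of_not_gt (Nat.find_min hex hi)
    have hinv : ∀ i : ℕ, i ≤ j' → g^[i] q < x0 := by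
      intro i
      induction i with
      | zero => intro _; simpa using hql
      | succ i ih =>
        intro hi
        have hi' : i < j' := lt_of_lt_of_le (Nat.lt_succ_self i) hi
        have h2 : g^[i] q < x0 := ih hi'.le
        rw [Function.iterate_succ_apply']
        exact lt_trans (hlt _ (hmin i hi') h2) h2
    have hchain : ∀ i : ℕ, i ≤ j' → Set.Icc (g^[i] q) x0 ⊆ g^[i] '' Set.Icc q x0 := by
      intro i
      induction i with
      | zero => intro _; simp
      | succ i ih =>
        intro hi
        have hi' : i < j' := lt_of_lt_of_le (Nat.lt_succ_self i) hi
        have hubI : g^[i] q ∈ Set.Icc a b := hm.iterate i hqI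
        have hsub2 : Set.Icc (g^[i] q) x0 ⊆ Set.Icc a b := fun x hx =>
          ⟨le_trans hubI.1 hx.1, le_trans hx.2 hx0I.2⟩
        have hle : g^[i] q ≤ x0 := (hinv i hi'.le).le
        have hIV : Set.Icc (g (g^[i] q)) (g x0) ⊆ g '' Set.Icc (g^[i] q) x0 :=
          intermediate_value_Icc hle (hg.mono hsub2)
        intro x hx
        have hx' : x ∈ Set.Icc (g (g^[i] q)) (g x0) := by
          rw [hfix]
          rwa [Function.iterate_succ_apply'] at hx
        obtain ⟨y, hy, hyx⟩ := hIV hx'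
        obtain ⟨z0, hz0, hz0y⟩ := ih hi'.le hy
        exact ⟨z0, hz0, by rw [Function.iterate_succ_apply', hz0y, hyx]⟩
    have hu2seg : u2 ∈ Set.Icc (g^[j'] q) x0 := ⟨le_trans hj'.le hu2m.1, hu2m.2⟩
    obtain ⟨t1, ht1, ht1u⟩ := hchain j' le_rfl hu2seg
    have ht1mem : t1 ∈ g^[L] '' Set.Icc α β :=
      hseg t1 (le_trans (min_le_left q x0) ht1.1) (le_trans ht1.2 (le_max_right q x0))
    obtain ⟨t, htHB, htL⟩ := ht1mem
    refine ⟨n2 + j' + L, t, Nat.le_add_left L (n2 + j'), htHB, ?_⟩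
    rw [Function.iterate_add_apply g (n2 + j') L t, htL,
      Function.iterate_add_apply g n2 j' t1, ht1u, hu2w]
  · -- x0 < q : pump through the right zone, use the right branch witness
    obtain ⟨n1, u1, hu1m, hu1w⟩ := hu1
    obtain ⟨j0, hj0⟩ := escapeRight hg hm hqI hqg hgt
    have hex : ∃ j : ℕ, x0 + δ < g^[j] q := ⟨j0, hj0⟩
    set j' := Nat.find hex with hj'def
    have hj' : x0 + δ < g^[j'] q := Nat.find_spec hex
    have hmin : ∀ i : ℕ, i < j' → g^[i] q ≤ x0 + δ := fun i hi =>
      le_of_not_gt (Nat.find_min hex hi)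
    have hinv : ∀ i : ℕ, i ≤ j' → x0 < g^[i] q := by
      intro i
      induction i with
      | zero => intro _; simpa using hqg
      | succ i ih =>
        intro hi
        have hi' : i < j' := lt_of_lt_of_le (Nat.lt_succ_self i) hi
        have h2 : x0 < g^[i] q := ih hi'.le
        rw [Function.iterate_succ_apply']
        exact lt_trans h2 (hgt _ h2 (hmin i hi'))
    have hchain : ∀ i : ℕ, i ≤ j' → Set.Icc x0 (g^[i] q) ⊆ g^[i] '' Set.Icc x0 q := by
      intro i
      induction i with
      | zero => intro _; simp
      | succ i ih =>
        intro hi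
        have hi' : i < j' := lt_of_lt_of_le (Nat.lt_succ_self i) hi
        have hubI : g^[i] q ∈ Set.Icc a b := hm.iterate i hqI
        have hsub2 : Set.Icc x0 (g^[i] q) ⊆ Set.Icc a b := fun x hx =>
          ⟨le_trans hx0I.1 hx.1, le_trans hx.2 hubI.2⟩
        have hle : x0 ≤ g^[i] q := (hinv i hi'.le).le
        have hIV : Set.Icc (g x0) (g (g^[i] q)) ⊆ g '' Set.Icc x0 (g^[i] q) :=
          intermediate_value_Icc hle (hg.mono hsub2)
        intro x hx
        have hx' : x ∈ Set.Icc (g x0) (g (g^[i] q)) := by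
          rw [hfix]
          rwa [Function.iterate_succ_apply'] at hx
        obtain ⟨y, hy, hyx⟩ := hIV hx'
        obtain ⟨z0, hz0, hz0y⟩ := ih hi'.le hy
        exact ⟨z0, hz0, by rw [Function.iterate_succ_apply', hz0y, hyx]⟩
    have hu1seg : u1 ∈ Set.Icc x0 (g^[j'] q) := ⟨hu1m.1, le_trans hu1m.2 hj'.le⟩
    obtain ⟨t1, ht1, ht1u⟩ := hchain j' le_rfl hu1seg
    have ht1mem : t1 ∈ g^[L] '' Set.Icc α β :=
      hseg t1 (le_trans (min_le_right q x0) ht1.1) (le_trans ht1.2 (le_max_left q x0))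
    obtain ⟨t, htHB, htL⟩ := ht1mem
    refine ⟨n1 + j' + L, t, Nat.le_add_left L (n1 + j'), htHB, ?_⟩
    rw [Function.iterate_add_apply g (n1 + j') L t, htL,
      Function.iterate_add_apply g n1 j' t1, ht1u, hu1w]

private lemma bracketAux {g : ℝ → ℝ} {a b x0 δ w : ℝ}
    (hg : ContinuousOn g (Set.Icc a b)) (hm : Set.MapsTo g (Set.Icc a b) (Set.Icc a b))
    (hnc : ∀ u v : ℝ, u < v → Set.Icc u v ⊆ Set.Icc a b →
      ∃ s ∈ Set.Icc u v, ∃ t ∈ Set.Icc u v, g s ≠ g t)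
    (hx0I : x0 ∈ Set.Icc a b) (hfix : g x0 = x0)
    (hlt : ∀ x : ℝ, x0 - δ ≤ x → x < x0 → g x < x)
    (hgt : ∀ x : ℝ, x0 < x → x ≤ x0 + δ → x < g x)
    {L : ℕ} (hL : 1 ≤ L) (hLw : g^[L] w = x0)
    (hwx0 : w ≠ x0) (hwI : w ∈ Set.Icc a b)
    (hu1 : ∃ n : ℕ, ∃ u ∈ Set.Icc x0 (x0 + δ), g^[n] u = w)
    (hu2 : ∃ n : ℕ, ∃ u ∈ Set.Icc (x0 - δ) x0, g^[n] u = w)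
    (ρ : ℝ) (hρ : 0 < ρ) :
    ∃ N : ℕ, ∃ t : ℝ, 1 ≤ N ∧ t ∈ Set.Icc a b ∧ |t - w| < ρ ∧
      g^[N] t = w ∧ g^[N] w = x0 ∧ ((t < w ∧ x0 < w) ∨ (w < t ∧ w < x0)) := by
  have hwNaux : ∀ N : ℕ, L ≤ N → g^[N] w = x0 := by
    intro N hLN
    obtain ⟨k, hk⟩ := Nat.exists_eq_add_of_le hLN
    rw [hk, add_comm, Function.iterate_add_apply, hLw, iterFixed hfix]
  rcases lt_or_gt_of_ne hwx0 with hw1 | hw1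
  · -- w < x0 : right half-neighborhood
    have hβ : w < min b (w + ρ/2) := lt_min (lt_of_lt_of_le hw1 hx0I.2) (by linarith)
    have hsubHB : Set.Icc w (min b (w + ρ/2)) ⊆ Set.Icc a b := fun x hx =>
      ⟨le_trans hwI.1 hx.1, le_trans hx.2 (min_le_left _ _)⟩
    obtain ⟨N, t, hLN, htHB, htw⟩ := coverAux hg hm hnc hx0I hfix hlt hgt hLw hu1 hu2
      hβ hsubHB ⟨le_rfl, hβ.le⟩
    have hwN : g^[N] w = x0 := hwNaux N hLN
    have htne : t ≠ w := by
      intro h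
      rw [h, hwN] at htw
      exact hwx0 htw.symm
    refine ⟨N, t, le_trans hL hLN, hsubHB htHB, ?_, htw, hwN,
      Or.inr ⟨lt_of_le_of_ne htHB.1 (Ne.symm htne), hw1⟩⟩
    have h2 : t ≤ w + ρ/2 := le_trans htHB.2 (min_le_right _ _)
    rw [abs_lt]
    constructor <;> [linarith [htHB.1]; linarith]
  · -- x0 < w : left half-neighborhood
    have hα : max a (w - ρ/2) < w := max_lt (lt_of_le_of_lt hx0I.1 hw1) (by linarith)
    have hsubHB : Set.Icc (max a (w - ρ/2)) w ⊆ Set.Icc a b := fun x hx =>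
      ⟨le_trans (le_max_left _ _) hx.1, le_trans hx.2 hwI.2⟩
    obtain ⟨N, t, hLN, htHB, htw⟩ := coverAux hg hm hnc hx0I hfix hlt hgt hLw hu1 hu2
      hα hsubHB ⟨hα.le, le_rfl⟩
    have hwN : g^[N] w = x0 := hwNaux N hLN
    have htne : t ≠ w := by
      intro h
      rw [h, hwN] at htw
      exact hwx0 htw.symm
    refine ⟨N, t, le_trans hL hLN, hsubHB htHB, ?_, htw, hwN,
      Or.inl ⟨lt_of_le_of_ne htHB.2 htne, hw1⟩⟩
    have h2 : w - ρ/2 ≤ t := le_trans (le_max_right _ _) htHB.1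
    rw [abs_lt]
    constructor <;> [linarith; linarith [htHB.2]]

private lemma iterateClose {g : ℝ → ℝ} {a b : ℝ}
    (hg : ContinuousOn g (Set.Icc a b)) (hm : Set.MapsTo g (Set.Icc a b) (Set.Icc a b)) :
    ∀ (N : ℕ) (ε : ℝ), 0 < ε → ∃ e : ℝ, 0 < e ∧ ∀ h : ℝ → ℝ,
      Set.MapsTo h (Set.Icc a b) (Set.Icc a b) →
      (∀ x ∈ Set.Icc a b, |h x - g x| ≤ e) →
      ∀ x ∈ Set.Icc a b, |h^[N] x - g^[N] x| < ε := by
  intro N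
  induction N with
  | zero =>
    intro ε hε
    exact ⟨1, one_pos, fun h _ _ x _ => by simpa using hε⟩
  | succ N ih =>
    intro ε hε
    have hUC := (isCompact_Icc : IsCompact (Set.Icc a b)).uniformContinuousOn_of_continuous hg
    rw [Metric.uniformContinuousOn_iff] at hUC
    obtain ⟨dg, hdg, hUC'⟩ := hUC (ε/2) (by linarith)
    obtain ⟨e1, he1, ih'⟩ := ih dg hdg
    refine ⟨min e1 (ε/2), lt_min he1 (by linarith), ?_⟩
    intro h hhm hhe x hx
    have hxN : h^[N] x ∈ Set.Icc a b := hhm.iterate N hx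
    have hgN : g^[N] x ∈ Set.Icc a b := hm.iterate N hx
    have h1 : |h (h^[N] x) - g (h^[N] x)| ≤ min e1 (ε/2) := hhe _ hxN
    have hdist : dist (h^[N] x) (g^[N] x) < dg := by
      rw [Real.dist_eq]
      exact ih' h hhm (fun y hy => le_trans (hhe y hy) (min_le_left _ _)) x hx
    have h2 : dist (g (h^[N] x)) (g (g^[N] x)) < ε/2 := hUC' _ hxN _ hgN hdist
    rw [Real.dist_eq] at h2
    have heq : h^[N+1] x - g^[N+1] x
        = (h (h^[N] x) - g (h^[N] x)) + (g (h^[N] x) - g (g^[N] x)) := by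
      rw [Function.iterate_succ_apply', Function.iterate_succ_apply']
      ring
    have habs : |h^[N+1] x - g^[N+1] x|
        ≤ |h (h^[N] x) - g (h^[N] x)| + |g (h^[N] x) - g (g^[N] x)| := by
      rw [heq]; exact abs_add_le _ _
    have h3 : min e1 (ε/2) ≤ ε/2 := min_le_right _ _
    linarith

private lemma familyClose {f : ℝ → ℝ → ℝ} {a b c d lam0 : ℝ}
    (hC1 : ContinuousOn (fun q : ℝ × ℝ => f q.1 q.2) (Set.Ioo c d ×ˢ Set.Icc a b))
    (hc : c < lam0) (hd : lam0 < d) :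
    ∀ e : ℝ, 0 < e → ∃ θ : ℝ, 0 < θ ∧ ∀ lam : ℝ, |lam - lam0| < θ →
      ∀ x ∈ Set.Icc a b, |f lam x - f lam0 x| ≤ e := by
  intro e he
  set l1 := (c + lam0)/2 with hl1
  set l2 := (lam0 + d)/2 with hl2
  have hC : IsCompact (Set.Icc l1 l2 ×ˢ Set.Icc a b) := isCompact_Icc.prod isCompact_Icc
  have hsub : Set.Icc l1 l2 ×ˢ Set.Icc a b ⊆ Set.Ioo c d ×ˢ Set.Icc a b := by
    apply Set.prod_mono _ le_rfl
    intro x hx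
    exact ⟨lt_of_lt_of_le (by rw [hl1]; linarith) hx.1, lt_of_le_of_lt hx.2 (by rw [hl2]; linarith)⟩
  have hUC := hC.uniformContinuousOn_of_continuous (hC1.mono hsub)
  rw [Metric.uniformContinuousOn_iff] at hUC
  obtain ⟨θ1, hθ1, hUC'⟩ := hUC e he
  refine ⟨min θ1 (min (lam0 - l1) (l2 - lam0)), ?_, ?_⟩
  · apply lt_min hθ1
    apply lt_min <;> [rw [hl1]; rw [hl2]] <;> linarith
  · intro lam hlam x hx
    have h1 : |lam - lam0| < θ1 := lt_of_lt_of_le hlam (min_le_left _ _)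
    have h2 : |lam - lam0| < lam0 - l1 :=
      lt_of_lt_of_le hlam (le_trans (min_le_right _ _) (min_le_left _ _))
    have h3 : |lam - lam0| < l2 - lam0 :=
      lt_of_lt_of_le hlam (le_trans (min_le_right _ _) (min_le_right _ _))
    rw [abs_lt] at h2 h3
    have hlammem : lam ∈ Set.Icc l1 l2 := ⟨by linarith [h2.1], by linarith [h3.2]⟩
    have hlam0mem : lam0 ∈ Set.Icc l1 l2 := by
      constructor <;> [rw [hl1]; rw [hl2]] <;> linarith
    have hdist : dist ((lam, x) : ℝ × ℝ) ((lam0, x) : ℝ × ℝ) < θ1 := by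
      rw [Prod.dist_eq]
      simp only [dist_self]
      rw [max_eq_left dist_nonneg, Real.dist_eq]
      exact h1
    have := hUC' (lam, x) ⟨hlammem, hx⟩ (lam0, x) ⟨hlam0mem, hx⟩ hdist
    rw [Real.dist_eq] at this
    exact this.le

/-- no explosion when the tangency point lies in both branches of the
unstable manifold. -/
theorem no_explosion_when_branches_intersect
(f : ℝ → ℝ → ℝ) (a b c d : ℝ) (hab : a < b) (hcd : c < d)
    (hmaps : ∀ lam ∈ Set.Ioo c d, Set.MapsTo (f lam) (Set.Icc a b) (Set.Icc a b))
    (hC1 : ContDiffOn ℝ 1 (fun q : ℝ × ℝ => f q.1 q.2) (Set.Ioo c d ×ˢ Set.Icc a b))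
    (hC2 : ∀ lam ∈ Set.Ioo c d, ContDiffOn ℝ 2 (f lam) (Set.Icc a b))
    (lam0 : ℝ) (hlam0 : lam0 ∈ Set.Ioo c d)
    (hnc : ∀ u v : ℝ, u < v → Set.Icc u v ⊆ Set.Icc a b →
      ∃ s ∈ Set.Icc u v, ∃ t ∈ Set.Icc u v, f lam0 s ≠ f lam0 t)
    (hhyp : AllPeriodicHyperbolic (f lam0))
    (x0 : ℝ) (hx0I : x0 ∈ Set.Icc a b)
    (hfix : f lam0 x0 = x0) (hder : 1 < deriv (f lam0) x0)
    (δ : ℝ) (hδ : GoodDelta (f lam0) x0 δ)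
    (z : ℕ → ℝ) (hhom : IsHomoclinicOrbit (f lam0) x0 z)
    (L : ℕ) (hL : 1 ≤ L) (w : ℝ) (hw : w = z L) (htan : deriv (f lam0) w = 0)
    (hcrit : ∀ k : ℕ, deriv (f lam0) (z k) = 0 → z k = w)
    (hboth : w ∈ URight (f lam0) x0 δ ∩ ULeft (f lam0) x0 δ) :
    ¬ ChainExplosionPoint f (Set.Ioo c d) lam0 w := by
  obtain ⟨hclam, hlamd⟩ := hlam0
  obtain ⟨hδpos, hmono, hlt, hgt⟩ := hδ
  have hlam0' : lam0 ∈ Set.Ioo c d := ⟨hclam, hlamd⟩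
  have hgc : ContinuousOn (f lam0) (Set.Icc a b) := (hC2 lam0 hlam0').continuousOn
  have hgm : Set.MapsTo (f lam0) (Set.Icc a b) (Set.Icc a b) := hmaps lam0 hlam0'
  -- the tangency point is not the fixed point
  have hwx0 : w ≠ x0 := by
    intro h
    rw [h] at htan
    rw [htan] at hder
    exact absurd hder (by norm_num)
  -- forward iterates of the homoclinic orbit reach x0
  have hziter : ∀ k : ℕ, (f lam0)^[k] (z k) = z 0 := by
    intro k
    induction k with
    | zero => rfl
    | succ k ih =>
      rw [Function.iterate_succ_apply, hhom.2.1 k, ih]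
  have hLw : (f lam0)^[L] w = x0 := by
    rw [hw, hziter L, hhom.1]
  -- unstable branch witnesses
  have hu1 : ∃ n : ℕ, ∃ u ∈ Set.Icc x0 (x0 + δ), (f lam0)^[n] u = w := by
    obtain ⟨n, hn⟩ := Set.mem_iUnion.mp hboth.1
    obtain ⟨u, hu, huw⟩ := hn
    exact ⟨n, u, hu, huw⟩
  have hu2 : ∃ n : ℕ, ∃ u ∈ Set.Icc (x0 - δ) x0, (f lam0)^[n] u = w := by
    obtain ⟨n, hn⟩ := Set.mem_iUnion.mp hboth.2
    obtain ⟨u, hu, huw⟩ := hn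
    exact ⟨n, u, hu, huw⟩
  -- boundary behaviour
  have hga : a ≤ f lam0 a := (hgm ⟨le_refl a, hab.le⟩).1
  have hgb : f lam0 b ≤ b := (hgm ⟨hab.le, le_refl b⟩).2
  -- the tangency point lies in [a,b]
  have hwI : w ∈ Set.Icc a b := by
    by_cases hda : a ≤ x0 - δ
    · obtain ⟨n, u, hu, huw⟩ := hu2
      have huI : u ∈ Set.Icc a b := ⟨le_trans hda hu.1, le_trans hu.2 hx0I.2⟩
      rw [← huw]
      exact hgm.iterate n huI
    · push_neg at hda
      have hx0a : x0 ≤ a := by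
        by_contra hax
        push_neg at hax
        exact absurd (hlt a hda.le hax) (not_lt.mpr hga)
      have hdb : x0 + δ ≤ b := by
        by_contra hbd'
        push_neg at hbd'
        have hx0b : x0 < b := lt_of_le_of_lt hx0a hab
        exact absurd (hgt b hx0b hbd'.le) (not_lt.mpr hgb)
      obtain ⟨n, u, hu, huw⟩ := hu1
      have huI : u ∈ Set.Icc a b := ⟨le_trans hx0I.1 hu.1, le_trans hu.2 hdb⟩
      rw [← huw]
      exact hgm.iterate n huI
  -- suppose there is an explosion
  rintro ⟨-, ρ, hρ, hside⟩
  -- the bracket: a nearby point t mapping exactly onto w, with w mapping onto x0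
  obtain ⟨N, t, hN1, htI, htρ, htw, hwN, hsign⟩ :=
    bracketAux hgc hgm hnc hx0I hfix hlt hgt hL hLw hwx0 hwI hu1 hu2 ρ hρ
  have htne : t ≠ w := by
    rcases hsign with ⟨h1, _⟩ | ⟨h1, _⟩
    · exact h1.ne
    · exact h1.ne'
  -- margins
  set εm : ℝ := min |w - x0| |w - t| / 2 with hεm
  have hεmpos : 0 < εm := by
    apply div_pos _ (by norm_num)
    apply lt_min
    · exact abs_pos.mpr (sub_ne_zero.mpr hwx0)
    · exact abs_pos.mpr (sub_ne_zero.mpr (Ne.symm htne))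
  obtain ⟨e, hepos, htrans⟩ := iterateClose hgc hgm N εm hεmpos
  obtain ⟨θ, hθpos, hclose⟩ := familyClose hC1.continuousOn hclam hlamd e hepos
  -- for any parameter θ-close to lam0, there is a periodic (hence chain recurrent)
  -- point in the ρ-ball around w
  have key : ∀ lam : ℝ, lam ∈ Set.Ioo c d → |lam - lam0| < θ →
      ∃ y ∈ Metric.ball w ρ, ChainRecurrent (f lam) y := by
    intro lam hlam hlamθ
    have hlm : Set.MapsTo (f lam) (Set.Icc a b) (Set.Icc a b) := hmaps lam hlam
    have hlc : ContinuousOn (f lam) (Set.Icc a b) := (hC2 lam hlam).continuousOn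
    have hcl : ∀ x ∈ Set.Icc a b, |f lam x - f lam0 x| ≤ e := hclose lam hlamθ
    have hiter : ∀ x ∈ Set.Icc a b, |(f lam)^[N] x - (f lam0)^[N] x| < εm :=
      htrans (f lam) hlm hcl
    have hw' : |(f lam)^[N] w - x0| < εm := by
      have := hiter w hwI
      rwa [hwN] at this
    have ht' : |(f lam)^[N] t - w| < εm := by
      have := hiter t htI
      rwa [htw] at this
    rw [abs_lt] at hw' ht'
    -- find a fixed point of (f lam)^[N] between t and w
    have hfixpt : ∃ y : ℝ, (f lam)^[N] y = y ∧
        ((t ≤ y ∧ y ≤ w) ∨ (w ≤ y ∧ y ≤ t)) := by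
      rcases hsign with ⟨htw2, hxw2⟩ | ⟨htw2, hxw2⟩
      · -- t < w and x0 < w
        have hwx : |w - x0| = w - x0 := abs_of_pos (by linarith)
        have hwt : |w - t| = w - t := abs_of_pos (by linarith)
        have hε1 : εm ≤ (w - x0) / 2 := by
          rw [hεm, hwx]
          apply div_le_div_of_nonneg_right ?_ ?_ |>.trans le_rfl
          · exact min_le_left _ _
          · norm_num
        have hε2 : εm ≤ (w - t) / 2 := by
          rw [hεm, hwt]
          apply div_le_div_of_nonneg_right ?_ ?_ |>.trans le_rfl
          · exact min_le_right _ _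
          · norm_num
        have hsubtw : Set.Icc t w ⊆ Set.Icc a b := fun x hx =>
          ⟨le_trans htI.1 hx.1, le_trans hx.2 hwI.2⟩
        have hφc : ContinuousOn (fun x => (f lam)^[N] x - x) (Set.Icc t w) :=
          ((contOnIter hlc hlm N).mono hsubtw).sub continuousOn_id
        have h0 : (0 : ℝ) ∈ Set.Icc ((f lam)^[N] w - w) ((f lam)^[N] t - t) := by
          constructor
          · linarith [hw'.2]
          · linarith [ht'.1]
        obtain ⟨y, hy, hy0⟩ := intermediate_value_Icc' htw2.le hφc h0
        have hy0' : (f lam)^[N] y - y = 0 := hy0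
        exact ⟨y, by linarith, Or.inl ⟨hy.1, hy.2⟩⟩
      · -- w < t and w < x0
        have hwx : |w - x0| = x0 - w := abs_of_neg (by linarith) |>.trans (by ring_nf)
        have hwt : |w - t| = t - w := abs_of_neg (by linarith) |>.trans (by ring_nf)
        have hε1 : εm ≤ (x0 - w) / 2 := by
          rw [hεm, hwx]
          apply div_le_div_of_nonneg_right ?_ ?_ |>.trans le_rfl
          · exact min_le_left _ _
          · norm_num
        have hε2 : εm ≤ (t - w) / 2 := by
          rw [hεm, hwt]
          apply div_le_div_of_nonneg_right ?_ ?_ |>.trans le_rfl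
          · exact min_le_right _ _
          · norm_num
        have hsubtw : Set.Icc w t ⊆ Set.Icc a b := fun x hx =>
          ⟨le_trans hwI.1 hx.1, le_trans hx.2 htI.2⟩
        have hφc : ContinuousOn (fun x => (f lam)^[N] x - x) (Set.Icc w t) :=
          ((contOnIter hlc hlm N).mono hsubtw).sub continuousOn_id
        have h0 : (0 : ℝ) ∈ Set.Icc ((f lam)^[N] t - t) ((f lam)^[N] w - w) := by
          constructor
          · linarith [ht'.2]
          · linarith [hw'.1]
        obtain ⟨y, hy, hy0⟩ := intermediate_value_Icc' htw2.le hφc h0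
        have hy0' : (f lam)^[N] y - y = 0 := hy0
        exact ⟨y, by linarith, Or.inr ⟨hy.1, hy.2⟩⟩
    obtain ⟨y, hyfix, hyloc⟩ := hfixpt
    have hyball : y ∈ Metric.ball w ρ := by
      rw [Metric.mem_ball, Real.dist_eq]
      rcases hyloc with ⟨h1, h2⟩ | ⟨h1, h2⟩
      · rw [abs_lt] at htρ ⊢
        constructor <;> linarith [htρ.1]
      · rw [abs_lt] at htρ ⊢
        constructor <;> linarith [htρ.2]
    refine ⟨y, hyball, ?_⟩
    intro ε hε
    refine ⟨N, hN1, fun n => (f lam)^[n] y, rfl, hyfix, ?_⟩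
    intro n h1 hn
    obtain ⟨m, rfl⟩ := Nat.exists_eq_succ_of_ne_zero (Nat.one_le_iff_ne_zero.mp h1)
    show |f lam ((f lam)^[m+1-1] y) - (f lam)^[m+1] y| < ε
    simp only [Nat.add_sub_cancel]
    rw [Function.iterate_succ_apply']
    simpa using hε
  -- both one-sided death conditions are refuted
  rcases hside with hdeath | hdeath
  · set lam : ℝ := lam0 - min θ (lam0 - c) / 2 with hlamdef
    have hminpos : 0 < min θ (lam0 - c) := lt_min hθpos (by linarith)
    have hlamlt : lam < lam0 := by
      rw [hlamdef]; linarith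
    have hlammem : lam ∈ Set.Ioo c d := by
      constructor
      · have : min θ (lam0 - c) ≤ lam0 - c := min_le_right _ _
        rw [hlamdef]; linarith
      · rw [hlamdef]; linarith
    have hlamθ : |lam - lam0| < θ := by
      have h1 : min θ (lam0 - c) ≤ θ := min_le_left _ _
      rw [hlamdef, abs_lt]
      constructor <;> linarith
    obtain ⟨y, hy, hCRy⟩ := key lam hlammem hlamθ
    exact hdeath lam hlammem hlamlt y hy hCRy
  · set lam : ℝ := lam0 + min θ (d - lam0) / 2 with hlamdef
    have hminpos : 0 < min θ (d - lam0) := lt_min hθpos (by linarith)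
    have hlamgt : lam0 < lam := by
      rw [hlamdef]; linarith
    have hlammem : lam ∈ Set.Ioo c d := by
      constructor
      · rw [hlamdef]; linarith
      · have : min θ (d - lam0) ≤ d - lam0 := min_le_right _ _
        rw [hlamdef]; linarith
    have hlamθ : |lam - lam0| < θ := by
      have h1 : min θ (d - lam0) ≤ θ := min_le_left _ _
      rw [hlamdef, abs_lt]
      constructor <;> linarith
    obtain ⟨y, hy, hCRy⟩ := key lam hlammem hlamθ
    exact hdeath lam hlammem hlamgt y hy hCRy
end
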